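/- arXiv:2311.02532 — 4 statements merged into one kernel-verified Lean document; each statement's English description precedes it below -/
import Mathlib

section
/- Let (Ω, F, P) be a probability space, O a random element of a measurable space, A a {0,1}-valued random variable, and Y a square-integrable real random variable. Let π be a measurable function of O with 0 < π(O) ≤ 1 almost surely that is a version of P(A = 1 | σ(O)), and let V¹ be a measurable function of O with V¹(O) square-integrable and E[1{A=1}(Y − V¹(O)) | σ(O)] = 0 almost surely. Then for any measurable functions π̂ and V̂ of O with π̂(O) ≥ ε almost surely for some ε > 0 and V̂(O) square-integrable, E[V̂(O) + (1{A=1}/π̂(O))(Y − V̂(O))] − E[V¹(O)] = E[(π(O)/π̂(O) − 1)(V¹(O) − V̂(O))]. -/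
open MeasureTheory

/-- **Double-robustness bias identity for the AIPW estimator.**
With `π` a version of `P(A = 1 | σ(O))` satisfying `0 < π(O) ≤ 1` a.s. and `V¹` a
square-integrable function of `O` with `E[1{A=1}(Y − V¹(O)) | σ(O)] = 0` a.s., for any
measurable `π̂, V̂` of `O` with `π̂(O) ≥ ε > 0` a.s. and `V̂(O)` square-integrable,
`E[V̂(O) + (1{A=1}/π̂(O))(Y − V̂(O))] − E[V¹(O)] = E[(π(O)/π̂(O) − 1)(V¹(O) − V̂(O))]`. -/
theorem aipw_double_robustness_identity
    {Ω 𝒪 : Type*} [MeasurableSpace Ω] [MeasurableSpace 𝒪]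
    (P : Measure Ω) [IsProbabilityMeasure P]
    (O : Ω → 𝒪) (hO : Measurable O)
    (A : Ω → Bool) (hA : Measurable A)
    (Y : Ω → ℝ) (hY : MemLp Y 2 P)
    (π : 𝒪 → ℝ) (hπm : Measurable π)
    (hπ : ∀ᵐ ω ∂P, 0 < π (O ω) ∧ π (O ω) ≤ 1)
    (hπcond : (fun ω => π (O ω)) =ᵐ[P]
      P[fun ω => if A ω then (1 : ℝ) else 0 | MeasurableSpace.comap O inferInstance])
    (V1 : 𝒪 → ℝ) (hV1m : Measurable V1) (hV1 : MemLp (fun ω => V1 (O ω)) 2 P)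
    (hV1cond :
      P[fun ω => (if A ω then (1 : ℝ) else 0) * (Y ω - V1 (O ω)) |
          MeasurableSpace.comap O inferInstance] =ᵐ[P] 0)
    (πhat Vhat : 𝒪 → ℝ) (hπhatm : Measurable πhat) (hVhatm : Measurable Vhat)
    (ε : ℝ) (hε : 0 < ε) (hπhat : ∀ᵐ ω ∂P, ε ≤ πhat (O ω))
    (hVhat : MemLp (fun ω => Vhat (O ω)) 2 P) :
    (∫ ω, (Vhat (O ω)
          + (if A ω then (1 : ℝ) else 0) / πhat (O ω) * (Y ω - Vhat (O ω))) ∂P)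
        - ∫ ω, V1 (O ω) ∂P
      = ∫ ω, (π (O ω) / πhat (O ω) - 1) * (V1 (O ω) - Vhat (O ω)) ∂P := by
  have hm : MeasurableSpace.comap O inferInstance ≤ _ := hO.comap_le
  have hOm : Measurable[MeasurableSpace.comap O inferInstance] O := fun s hs => ⟨s, hs, rfl⟩
  -- a.e. bound on 1/πhat(O)
  have hbound : ∀ᵐ ω ∂P, ‖(πhat (O ω))⁻¹‖ ≤ ε⁻¹ := by
    filter_upwards [hπhat] with ω hω
    rw [Real.norm_eq_abs, abs_of_nonneg (inv_nonneg.2 (le_of_lt (hε.trans_le hω)))]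
    exact inv_anti₀ hε hω
  have hinvm : Measurable[MeasurableSpace.comap O inferInstance] fun ω => (πhat (O ω))⁻¹ :=
    (hπhatm.comp hOm).inv
  have hinv_aesm : AEStronglyMeasurable (fun ω => (πhat (O ω))⁻¹) P :=
    ((hπhatm.comp hO).inv).aestronglyMeasurable
  -- indicator function
  set χ : Ω → ℝ := fun ω => if A ω then (1 : ℝ) else 0 with hχ_def
  have hχm : Measurable χ := Measurable.ite (hA (measurableSet_singleton true)) measurable_const measurable_const
  have hχ_bd : ∀ᵐ ω ∂P, ‖χ ω‖ ≤ 1 := by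
    filter_upwards with ω
    by_cases h : A ω <;> simp [χ, h]
  -- integrable pieces
  have hYi : Integrable Y P := hY.integrable one_le_two
  have hV1i : Integrable (fun ω => V1 (O ω)) P := hV1.integrable one_le_two
  have hVhati : Integrable (fun ω => Vhat (O ω)) P := hVhat.integrable one_le_two
  -- g := χ * (Y - V1 ∘ O), integrable
  set g : Ω → ℝ := fun ω => χ ω * (Y ω - V1 (O ω)) with hg_def
  have hgi : Integrable g P :=
    Integrable.bdd_mul (hYi.sub hV1i) hχm.aestronglyMeasurable hχ_bd
  -- step 1 : ∫ (1/πhat(O)) * g = 0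
  have hhg_i : Integrable (fun ω => (πhat (O ω))⁻¹ * g ω) P :=
    Integrable.bdd_mul hgi hinv_aesm hbound
  have step1 : ∫ ω, (πhat (O ω))⁻¹ * g ω ∂P = 0 := by
    have hce := condExp_mul_of_stronglyMeasurable_left (μ := P) (m := MeasurableSpace.comap O inferInstance)
      hinvm.stronglyMeasurable hhg_i hgi
    have : ∫ ω, (πhat (O ω))⁻¹ * g ω ∂P
        = ∫ ω, (P[fun ω => (πhat (O ω))⁻¹ * g ω | MeasurableSpace.comap O inferInstance]) ω ∂P :=
      (integral_condExp hm).symm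
    rw [this]
    have hzero : (P[fun ω => (πhat (O ω))⁻¹ * g ω | MeasurableSpace.comap O inferInstance]) =ᵐ[P] 0 := by
      refine hce.trans ?_
      filter_upwards [hV1cond] with ω hω
      simp only [Pi.mul_apply, Pi.zero_apply]
      rw [hω]; simp
    rw [integral_congr_ae hzero]
    simp
  -- step 2 : ∫ k * χ = ∫ k * π(O), where k := (1/πhat(O)) * (V1(O) - Vhat(O))
  set k : Ω → ℝ := fun ω => (πhat (O ω))⁻¹ * (V1 (O ω) - Vhat (O ω)) with hk_def
  have hk_i : Integrable k P :=
    Integrable.bdd_mul (hV1i.sub hVhati) hinv_aesm hbound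
  have hkm : StronglyMeasurable[MeasurableSpace.comap O inferInstance] k :=
    (hinvm.mul ((hV1m.comp hOm).sub (hVhatm.comp hOm))).stronglyMeasurable
  have hχi : Integrable χ P :=
    Integrable.bdd_mul (integrable_const 1) hχm.aestronglyMeasurable
      (by filter_upwards [hχ_bd] with ω h; simpa using h) |>.congr
      (by filter_upwards with ω; simp)
  have hkχ_i : Integrable (fun ω => k ω * χ ω) P := by
    have : Integrable (fun ω => χ ω * k ω) P :=
      Integrable.bdd_mul hk_i hχm.aestronglyMeasurable hχ_bd
    exact this.congr (by filter_upwards with ω; ring_nf)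
  have step2 : ∫ ω, k ω * χ ω ∂P = ∫ ω, k ω * π (O ω) ∂P := by
    have hce := condExp_mul_of_stronglyMeasurable_left (μ := P) (m := MeasurableSpace.comap O inferInstance) hkm hkχ_i hχi
    have h1 : ∫ ω, k ω * χ ω ∂P = ∫ ω, (P[fun ω => k ω * χ ω | MeasurableSpace.comap O inferInstance]) ω ∂P :=
      (integral_condExp hm).symm
    rw [h1]
    refine integral_congr_ae ?_
    refine hce.trans ?_
    filter_upwards [hπcond] with ω hω
    simp only [Pi.mul_apply]
    rw [← hω]
  -- integrabilities for splitting
  have hπO_bd : ∀ᵐ ω ∂P, ‖π (O ω)‖ ≤ 1 := by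
    filter_upwards [hπ] with ω hω
    rw [Real.norm_eq_abs, abs_of_pos hω.1]; exact hω.2
  have hkπ_i : Integrable (fun ω => k ω * π (O ω)) P := by
    have : Integrable (fun ω => π (O ω) * k ω) P :=
      Integrable.bdd_mul hk_i (hπm.comp hO).aestronglyMeasurable hπO_bd
    exact this.congr (by filter_upwards with ω; ring_nf)
  -- decompose the LHS integrand
  have hdecomp : ∀ ω, Vhat (O ω) + (if A ω then (1 : ℝ) else 0) / πhat (O ω) * (Y ω - Vhat (O ω))
      = Vhat (O ω) + ((πhat (O ω))⁻¹ * g ω + k ω * χ ω) := by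
    intro ω
    simp only [g, k, χ, div_eq_inv_mul]
    ring
  have hLHS : (∫ ω, (Vhat (O ω)
          + (if A ω then (1 : ℝ) else 0) / πhat (O ω) * (Y ω - Vhat (O ω))) ∂P)
      = (∫ ω, Vhat (O ω) ∂P) + ∫ ω, k ω * π (O ω) ∂P := by
    calc (∫ ω, (Vhat (O ω)
          + (if A ω then (1 : ℝ) else 0) / πhat (O ω) * (Y ω - Vhat (O ω))) ∂P)
        = ∫ ω, (Vhat (O ω) + ((πhat (O ω))⁻¹ * g ω + k ω * χ ω)) ∂P := by
          exact integral_congr_ae (Filter.Eventually.of_forall hdecomp)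
      _ = (∫ ω, Vhat (O ω) ∂P) + ∫ ω, ((πhat (O ω))⁻¹ * g ω + k ω * χ ω) ∂P :=
          integral_add hVhati (hhg_i.add hkχ_i)
      _ = (∫ ω, Vhat (O ω) ∂P) + ((∫ ω, (πhat (O ω))⁻¹ * g ω ∂P) + ∫ ω, k ω * χ ω ∂P) := by
          rw [integral_add hhg_i hkχ_i]
      _ = (∫ ω, Vhat (O ω) ∂P) + ∫ ω, k ω * π (O ω) ∂P := by
          rw [step1, step2]; ring
  -- RHS
  have hRHS : ∫ ω, (π (O ω) / πhat (O ω) - 1) * (V1 (O ω) - Vhat (O ω)) ∂P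
      = (∫ ω, k ω * π (O ω) ∂P) - (∫ ω, V1 (O ω) ∂P) + ∫ ω, Vhat (O ω) ∂P := by
    have heq : ∀ ω, (π (O ω) / πhat (O ω) - 1) * (V1 (O ω) - Vhat (O ω))
        = k ω * π (O ω) - (V1 (O ω) - Vhat (O ω)) := by
      intro ω; simp only [k, div_eq_inv_mul]; ring
    calc ∫ ω, (π (O ω) / πhat (O ω) - 1) * (V1 (O ω) - Vhat (O ω)) ∂P
        = ∫ ω, (k ω * π (O ω) - (V1 (O ω) - Vhat (O ω))) ∂P :=
          integral_congr_ae (Filter.Eventually.of_forall heq)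
      _ = (∫ ω, k ω * π (O ω) ∂P) - ∫ ω, (V1 (O ω) - Vhat (O ω)) ∂P :=
          integral_sub hkπ_i (hV1i.sub hVhati)
      _ = (∫ ω, k ω * π (O ω) ∂P) - (∫ ω, V1 (O ω) ∂P) + ∫ ω, Vhat (O ω) ∂P := by
          rw [integral_sub hV1i hVhati]; ring
  rw [hLHS, hRHS]; ring
end

section
/- Let (Ω, F, P) be a probability space, O a random element of a measurable space, A a {0,1}-valued random variable, and Y a square-integrable real random variable. Let π be a measurable function of O with ε ≤ π(O) ≤ 1 − ε almost surely for some ε > 0, such that π(O) is a version of P(A = 1 | σ(O)). For a ∈ {0,1} write π_a(O) for π(O) if a = 1 and 1 − π(O) if a = 0; let V^a be a measurable function of O with V^a(O) square-integrable and E[1{A=a}(Y − V^a(O)) | σ(O)] = 0 almost surely, and let σ_a²(O) be a nonnegative measurable function of O with E[1{A=a}(Y − V^a(O))² | σ(O)] = π_a(O)·σ_a²(O) almost surely. Define ψ = Σ_{a∈{0,1}} (−1)^{a+1} [V^a(O) + (1{A=a}/π_a(O))(Y − V^a(O))]. Then E[ψ] = E[V¹(O) − V⁰(O)] and Var(ψ)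 = E[σ_1²(O)/π(O)] + E[σ_0²(O)/(1 − π(O))] + Var(V¹(O) − V⁰(O)). -/
open MeasureTheory ProbabilityTheory

lemma l2_mul_integrable' {Ω : Type*} [MeasurableSpace Ω] {P : Measure Ω} {f g : Ω → ℝ}
    (hf : MemLp f 2 P) (hg : MemLp g 2 P) : Integrable (fun ω => f ω * g ω) P := by
  have h : MemLp (f • g) 1 P := hg.smul hf
  exact memLp_one_iff_integrable.mp h

lemma integral_mul_condexp' {Ω : Type*} {m m0 : MeasurableSpace Ω}
    (hm : m ≤ m0) {P : Measure Ω} [IsFiniteMeasure P] {g Z : Ω → ℝ}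
    (hg : StronglyMeasurable[m] g) (hgZ : Integrable (fun ω => g ω * Z ω) P)
    (hZ : Integrable Z P) :
    ∫ ω, g ω * Z ω ∂P = ∫ ω, g ω * (P[Z|m]) ω ∂P := by
  have h : P[g * Z|m] =ᵐ[P] g * P[Z|m] :=
    condExp_mul_of_stronglyMeasurable_left hg hgZ hZ
  have h2 : ∫ ω, (P[g * Z|m]) ω ∂P = ∫ ω, (g * Z) ω ∂P := integral_condExp (μ := P) (f := g * Z) hm
  calc ∫ ω, g ω * Z ω ∂P = ∫ ω, (P[g * Z|m]) ω ∂P := h2.symm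
    _ = ∫ ω, (g * P[Z|m]) ω ∂P := integral_congr_ae h
    _ = ∫ ω, g ω * (P[Z|m]) ω ∂P := rfl

lemma integral_comp_mul_condexp' {Ω 𝒪 : Type*} [MeasurableSpace Ω] [MeasurableSpace 𝒪]
    {P : Measure Ω} [IsFiniteMeasure P] {O : Ω → 𝒪} (hO : Measurable O)
    {G : 𝒪 → ℝ} (hG : Measurable G) {Z : Ω → ℝ}
    (hgZ : Integrable (fun ω => G (O ω) * Z ω) P) (hZ : Integrable Z P) :
    ∫ ω, G (O ω) * Z ω ∂P
      = ∫ ω, G (O ω) * (P[Z|MeasurableSpace.comap O inferInstance]) ω ∂P := by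
  have hOm : @Measurable Ω 𝒪 (MeasurableSpace.comap O inferInstance) _ O :=
    Measurable.of_comap_le le_rfl
  exact integral_mul_condexp' (P := P) hO.comap_le (hG.comp hOm).stronglyMeasurable hgZ hZ

/-- **Variance decomposition of the AIPW score (single-stage efficiency bound `EB₁`).**
With `ε ≤ π(O) ≤ 1 − ε` a version of `P(A = 1 | σ(O))`, arm-wise value functions `V a`
satisfying `E[1{A=a}(Y − V^a(O)) | σ(O)] = 0` a.s., and conditional variances `s2 a`
satisfying `E[1{A=a}(Y − V^a(O))² | σ(O)] = π_a(O)·s2_a(O)` a.s., the AIPW score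
`ψ = Σ_a (−1)^{a+1} [V^a(O) + (1{A=a}/π_a(O))(Y − V^a(O))]` satisfies
`E[ψ] = E[V¹(O) − V⁰(O)]` and
`Var(ψ) = E[s2₁(O)/π(O)] + E[s2₀(O)/(1 − π(O))] + Var(V¹(O) − V⁰(O))`. -/
theorem aipw_score_variance_decomposition
    {Ω 𝒪 : Type*} [MeasurableSpace Ω] [MeasurableSpace 𝒪]
    (P : Measure Ω) [IsProbabilityMeasure P]
    (O : Ω → 𝒪) (hO : Measurable O)
    (A : Ω → Bool) (hA : Measurable A)
    (Y : Ω → ℝ) (hY : MemLp Y 2 P)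
    (π : 𝒪 → ℝ) (hπm : Measurable π)
    (ε : ℝ) (hε : 0 < ε)
    (hπ : ∀ᵐ ω ∂P, ε ≤ π (O ω) ∧ π (O ω) ≤ 1 - ε)
    (hπcond : (fun ω => π (O ω)) =ᵐ[P]
      P[fun ω => if A ω then (1 : ℝ) else 0 | MeasurableSpace.comap O inferInstance])
    (V : Bool → 𝒪 → ℝ) (hVm : ∀ a, Measurable (V a))
    (hVL2 : ∀ a, MemLp (fun ω => V a (O ω)) 2 P)
    (hVcond : ∀ a,
      P[fun ω => (if A ω = a then (1 : ℝ) else 0) * (Y ω - V a (O ω)) |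
          MeasurableSpace.comap O inferInstance] =ᵐ[P] 0)
    (s2 : Bool → 𝒪 → ℝ) (hs2m : ∀ a, Measurable (s2 a)) (hs2nn : ∀ a o, 0 ≤ s2 a o)
    (hs2cond : ∀ a,
      P[fun ω => (if A ω = a then (1 : ℝ) else 0) * (Y ω - V a (O ω)) ^ 2 |
          MeasurableSpace.comap O inferInstance]
        =ᵐ[P] fun ω => (if a then π (O ω) else 1 - π (O ω)) * s2 a (O ω)) :
    (∫ ω, ((V true (O ω)
            + (if A ω = true then (1 : ℝ) else 0) / π (O ω) * (Y ω - V true (O ω)))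
          - (V false (O ω)
            + (if A ω = false then (1 : ℝ) else 0) / (1 - π (O ω))
                * (Y ω - V false (O ω)))) ∂P
        = ∫ ω, (V true (O ω) - V false (O ω)) ∂P) ∧
    variance (fun ω =>
        (V true (O ω)
            + (if A ω = true then (1 : ℝ) else 0) / π (O ω) * (Y ω - V true (O ω)))
          - (V false (O ω)
            + (if A ω = false then (1 : ℝ) else 0) / (1 - π (O ω))
                * (Y ω - V false (O ω)))) P
      = (∫ ω, s2 true (O ω) / π (O ω) ∂P) + (∫ ω, s2 false (O ω) / (1 - π (O ω)) ∂P)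
          + variance (fun ω => V true (O ω) - V false (O ω)) P := by
  classical
  set W : Bool → 𝒪 → ℝ := fun a o => if a then π o else 1 - π o with hW
  set Z : Bool → Ω → ℝ := fun a ω => (if A ω = a then (1:ℝ) else 0) * (Y ω - V a (O ω)) with hZ
  set R : Bool → Ω → ℝ :=
    fun a ω => (if A ω = a then (1:ℝ) else 0) / W a (O ω) * (Y ω - V a (O ω)) with hR
  set Q : Bool → Ω → ℝ :=
    fun a ω => (if A ω = a then (1:ℝ) else 0) * (Y ω - V a (O ω)) ^ 2 with hQ
  set D : Ω → ℝ := fun ω => V true (O ω) - V false (O ω) with hD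
  -- basic a.e. bound on the weights
  have hwa : ∀ a, ∀ᵐ ω ∂P, ε ≤ W a (O ω) := by
    intro a
    filter_upwards [hπ] with ω hπω
    cases a <;>
      simp only [hW, Bool.false_eq_true, if_true, if_false, ite_true, ite_false] <;>
      linarith [hπω.1, hπω.2]
  -- measurability
  have hindm : ∀ a : Bool, Measurable fun ω => (if A ω = a then (1:ℝ) else 0) := fun a =>
    Measurable.ite (hA (measurableSet_singleton a)) measurable_const measurable_const
  have hWm : ∀ a, Measurable (W a) := by
    intro a
    cases a
    · simpa only [hW, Bool.false_eq_true, ite_false] using (hπm.const_sub 1)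
    · simpa only [hW, ite_true] using hπm
  -- MemLp facts
  have hYV : ∀ a, MemLp (fun ω => Y ω - V a (O ω)) 2 P := fun a => hY.sub (hVL2 a)
  have hZaesm : ∀ a, AEStronglyMeasurable (Z a) P := by
    intro a
    simp only [hZ]
    exact (hindm a).aestronglyMeasurable.mul (hYV a).1
  have hZmem : ∀ a, MemLp (Z a) 2 P := by
    intro a
    refine MemLp.of_le (hYV a) (hZaesm a) ?_
    refine Filter.Eventually.of_forall fun ω => ?_
    by_cases h : A ω = a <;> simp [hZ, h]
  have hRaesm : ∀ a, AEStronglyMeasurable (R a) P := by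
    intro a
    simp only [hR]
    exact (((hindm a).div ((hWm a).comp hO)).aestronglyMeasurable).mul (hYV a).1
  have hRmem : ∀ a, MemLp (R a) 2 P := by
    intro a
    refine MemLp.of_le ((hYV a).const_mul ε⁻¹) (hRaesm a) ?_
    filter_upwards [hwa a] with ω hwω
    have hw0 : 0 < W a (O ω) := lt_of_lt_of_le hε hwω
    by_cases h : A ω = a
    · have hRval : R a ω = 1 / W a (O ω) * (Y ω - V a (O ω)) := by simp [hR, h]
      rw [hRval, Real.norm_eq_abs, Real.norm_eq_abs, abs_mul, abs_mul]
      apply mul_le_mul_of_nonneg_right _ (abs_nonneg _)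
      rw [abs_of_pos (div_pos one_pos hw0), abs_of_pos (inv_pos.mpr hε)]
      rw [one_div]
      exact inv_anti₀ hε hwω
    · have hRval : R a ω = 0 := by simp [hR, h]
      rw [hRval]
      simp only [norm_zero]
      positivity
  have hDmem : MemLp D 2 P := (hVL2 true).sub (hVL2 false)
  -- integrability facts
  have hZint : ∀ a, Integrable (Z a) P := fun a => (hZmem a).integrable one_le_two
  have hRint : ∀ a, Integrable (R a) P := fun a => (hRmem a).integrable one_le_two
  have hQint : ∀ a, Integrable (Q a) P := by
    intro a
    have hQaesm : AEStronglyMeasurable (Q a) P := by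
      simp only [hQ]
      exact (hindm a).aestronglyMeasurable.mul ((hYV a).1.pow 2)
    refine ((hYV a).integrable_sq).mono hQaesm ?_
    refine Filter.Eventually.of_forall fun ω => ?_
    by_cases h : A ω = a <;> simp [hQ, h] <;> positivity
  have hDint : Integrable D P := hDmem.integrable one_le_two
  -- key conditional-expectation integrals
  have E1 : ∀ a, ∫ ω, R a ω ∂P = 0 := by
    intro a
    have hre : ∀ ω, R a ω = (W a (O ω))⁻¹ * Z a ω := fun ω => by
      simp only [hR, hZ, div_eq_mul_inv]; ring
    have hgZ : Integrable (fun ω => (W a (O ω))⁻¹ * Z a ω) P :=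
      (hRint a).congr (Filter.Eventually.of_forall hre)
    calc ∫ ω, R a ω ∂P = ∫ ω, (W a (O ω))⁻¹ * Z a ω ∂P :=
          integral_congr_ae (Filter.Eventually.of_forall hre)
      _ = ∫ ω, (W a (O ω))⁻¹
            * (P[Z a|MeasurableSpace.comap O inferInstance]) ω ∂P :=
          integral_comp_mul_condexp' hO (hWm a).inv hgZ (hZint a)
      _ = 0 := by
          rw [← integral_zero Ω ℝ (μ := P)]
          refine integral_congr_ae ?_
          filter_upwards [hVcond a] with ω hc
          simp [show (P[Z a|MeasurableSpace.comap O inferInstance]) ω = 0 from hc]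
  have E2 : ∀ a, ∫ ω, D ω * R a ω ∂P = 0 := by
    intro a
    have hre : ∀ ω, D ω * R a ω
        = ((V true (O ω) - V false (O ω)) * (W a (O ω))⁻¹) * Z a ω := fun ω => by
      simp only [hR, hZ, hD, div_eq_mul_inv]; ring
    have hgZ : Integrable
        (fun ω => ((V true (O ω) - V false (O ω)) * (W a (O ω))⁻¹) * Z a ω) P :=
      (l2_mul_integrable' hDmem (hRmem a)).congr (Filter.Eventually.of_forall hre)
    calc ∫ ω, D ω * R a ω ∂P
        = ∫ ω, ((V true (O ω) - V false (O ω)) * (W a (O ω))⁻¹) * Z a ω ∂P :=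
          integral_congr_ae (Filter.Eventually.of_forall hre)
      _ = ∫ ω, ((V true (O ω) - V false (O ω)) * (W a (O ω))⁻¹)
            * (P[Z a|MeasurableSpace.comap O inferInstance]) ω ∂P :=
          integral_comp_mul_condexp' hO (((hVm true).sub (hVm false)).mul (hWm a).inv)
            hgZ (hZint a)
      _ = 0 := by
          rw [← integral_zero Ω ℝ (μ := P)]
          refine integral_congr_ae ?_
          filter_upwards [hVcond a] with ω hc
          simp [show (P[Z a|MeasurableSpace.comap O inferInstance]) ω = 0 from hc]
  have E3 : ∀ a, ∫ ω, (R a ω) ^ 2 ∂P = ∫ ω, s2 a (O ω) / W a (O ω) ∂P := by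
    intro a
    have hre : ∀ ω, (R a ω) ^ 2 = ((W a (O ω))⁻¹ * (W a (O ω))⁻¹) * Q a ω := fun ω => by
      by_cases h : A ω = a <;> simp [hR, hQ, h, div_eq_mul_inv] <;> ring
    have hgZ : Integrable (fun ω => ((W a (O ω))⁻¹ * (W a (O ω))⁻¹) * Q a ω) P :=
      ((hRmem a).integrable_sq).congr (Filter.Eventually.of_forall hre)
    calc ∫ ω, (R a ω) ^ 2 ∂P = ∫ ω, ((W a (O ω))⁻¹ * (W a (O ω))⁻¹) * Q a ω ∂P :=
          integral_congr_ae (Filter.Eventually.of_forall hre)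
      _ = ∫ ω, ((W a (O ω))⁻¹ * (W a (O ω))⁻¹)
            * (P[Q a|MeasurableSpace.comap O inferInstance]) ω ∂P :=
          integral_comp_mul_condexp' hO ((hWm a).inv.mul (hWm a).inv) hgZ (hQint a)
      _ = ∫ ω, s2 a (O ω) / W a (O ω) ∂P := by
          refine integral_congr_ae ?_
          filter_upwards [hs2cond a, hwa a] with ω hc hwω
          have hw0 : W a (O ω) ≠ 0 := ne_of_gt (lt_of_lt_of_le hε hwω)
          have hceq : (P[Q a|MeasurableSpace.comap O inferInstance]) ω
              = W a (O ω) * s2 a (O ω) := hc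
          rw [hceq]
          field_simp
  -- the score and its decomposition
  have hpsi_eq : (fun ω =>
        (V true (O ω)
            + (if A ω = true then (1 : ℝ) else 0) / π (O ω) * (Y ω - V true (O ω)))
          - (V false (O ω)
            + (if A ω = false then (1 : ℝ) else 0) / (1 - π (O ω))
                * (Y ω - V false (O ω)))) = fun ω => D ω + R true ω - R false ω := by
    funext ω
    simp only [hR, hD, hW, Bool.false_eq_true, ite_true, ite_false]
    ring
  have hD_Rt : Integrable (fun ω => D ω + R true ω) P := hDint.add (hRint true)
  have hEψ : ∫ ω, (D ω + R true ω - R false ω) ∂P = ∫ ω, D ω ∂P := by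
    rw [integral_sub hD_Rt (hRint false), integral_add hDint (hRint true),
      E1 true, E1 false]
    ring
  constructor
  · rw [hpsi_eq, hEψ]
  · -- variance part
    have hψmem : MemLp (fun ω => D ω + R true ω - R false ω) 2 P :=
      (hDmem.add (hRmem true)).sub (hRmem false)
    have hRtRf : ∀ ω, R true ω * R false ω = 0 := by
      intro ω
      cases h : A ω <;> simp [hR, h]
    have hsq : (fun ω => (D ω + R true ω - R false ω) ^ 2) =
        fun ω => (D ω ^ 2 + R true ω ^ 2 + R false ω ^ 2)
          + (2 * (D ω * R true ω) - 2 * (D ω * R false ω)) := by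
      funext ω
      linear_combination (-2 : ℝ) * hRtRf ω
    have hD2 : Integrable (fun ω => D ω ^ 2) P := hDmem.integrable_sq
    have hRt2 : Integrable (fun ω => R true ω ^ 2) P := (hRmem true).integrable_sq
    have hRf2 : Integrable (fun ω => R false ω ^ 2) P := (hRmem false).integrable_sq
    have hDRt : Integrable (fun ω => D ω * R true ω) P := l2_mul_integrable' hDmem (hRmem true)
    have hDRf : Integrable (fun ω => D ω * R false ω) P := l2_mul_integrable' hDmem (hRmem false)
    have h2DRt : Integrable (fun ω => 2 * (D ω * R true ω)) P := hDRt.const_mul 2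
    have h2DRf : Integrable (fun ω => 2 * (D ω * R false ω)) P := hDRf.const_mul 2
    have hsum1 : Integrable (fun ω => D ω ^ 2 + R true ω ^ 2) P := hD2.add hRt2
    have hsum2 : Integrable (fun ω => D ω ^ 2 + R true ω ^ 2 + R false ω ^ 2) P :=
      hsum1.add hRf2
    have hsum3 : Integrable
        (fun ω => 2 * (D ω * R true ω) - 2 * (D ω * R false ω)) P := h2DRt.sub h2DRf
    have hEsq : ∫ ω, (D ω + R true ω - R false ω) ^ 2 ∂P
        = ∫ ω, D ω ^ 2 ∂P + ∫ ω, R true ω ^ 2 ∂P + ∫ ω, R false ω ^ 2 ∂P := by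
      rw [hsq, integral_add hsum2 hsum3, integral_add hsum1 hRf2, integral_add hD2 hRt2,
        integral_sub h2DRt h2DRf, integral_const_mul, integral_const_mul, E2 true, E2 false]
      ring
    have e3t : ∫ ω, (R true ω) ^ 2 ∂P = ∫ ω, s2 true (O ω) / π (O ω) ∂P := by
      rw [E3 true]
      refine integral_congr_ae (Filter.Eventually.of_forall fun ω => ?_)
      simp [hW]
    have e3f : ∫ ω, (R false ω) ^ 2 ∂P = ∫ ω, s2 false (O ω) / (1 - π (O ω)) ∂P := by
      rw [E3 false]
      refine integral_congr_ae (Filter.Eventually.of_forall fun ω => ?_)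
      simp [hW]
    rw [hpsi_eq, variance_eq_sub hψmem, variance_eq_sub hDmem]
    simp only [Pi.pow_apply]
    rw [hEsq, hEψ, e3t, e3f]
    ring
end

section
/- Fix a finite nonempty observation set 𝒪, an integer horizon T ≥ 1, actions in {0,1}, and a finite reward alphabet ℛ ⊂ ℝ. Let μ be a probability mass function on 𝒪 and, for each t ∈ {1,…,T}, each history h_t = (o_1, a_1, …, o_t) and each action a_t ∈ {0,1}, let q_t(·, · | h_t, a_t) be a probability mass function on ℛ × 𝒪 specifying jointly the reward R_t and the next observation O_{t+1} (the next-observation component being irrelevant at t = T). For a ∈ {0,1}, let E^a denote expectation under the process with O_1 ~ μ and A_t = a for all t; define V_t^a(h_t) = E^a[Σ_{k=t}^T R_k | H_t = h_t] with V_{T+1}^a ≡ 0, define σ_t²(h_t, a) = Var(R_t + V_{t+1}^a(H_{t+1}) − V_t^a(h_t) | H_t = h_t, A_t = a), and define σ_*²(o, a) = E^a[(Σ_{t=1}^T R_t − V_1^a(o))² | O_1 = o]; assume σ_*(o, a) > 0 for all o ∈ 𝒪 and a ∈ {0,1}. A behavior policy π^b assigns, for each t and history h_t, probabilities π_t^b(a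 | h_t) ≥ 0 summing to one over a ∈ {0,1}; let E^{π^b} denote expectation under the induced trajectory law and define EB_1(π^b) = T^{−2} Σ_{a∈{0,1}} Σ_{t=1}^T E^{π^b}[σ_t²(H_t, a) Π_{k≤t} 1(A_k = a)/π_k^b(a | H_k)²] + T^{−2} Var_{O_1∼μ}(V_1^1(O_1) − V_1^0(O_1)), with the convention that a summand is 0 on the event that A_k ≠ a for some k ≤ t. Then for every behavior policy π^b with π_t^b(a | h_t) > 0 for all t, a, h_t, one has EB_1(π^b) ≥ T^{−2} E_{O_1∼μ}[(σ_*(O_1, 0) + σ_*(O_1, 1))²] + T^{−2} Var_{O_1∼μ}(V_1^1(O_1) − V_1^0(O_1)), and equality holds for the policy π^{b*} defined by π_1^{b*}(a | o_1) = σ_*(o_1, a)/(σ_*(o_1, 0) + σ_*(o_1, 1)) and π_t^{b*}(a_1 | h_t) = 1 for all t ≥ 2 (that is, A_1 = A_2 = ⋯ = A_T under π^{b*}). -/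
open Finset

/-- History at (0-indexed) time `t`: observations `o_0, …, o_t` and actions
`a_0, …, a_{t-1}` (this is the paper's `h_{t+1} = (o_1, a_1, …, o_{t+1})` in
1-indexed notation). -/
abbrev Hist (𝒪 : Type) (t : ℕ) : Type := (Fin (t + 1) → 𝒪) × (Fin t → Bool)

/-- Extend a history by an action and a next observation. -/
def Hist.extend {𝒪 : Type} {t : ℕ} (h : Hist 𝒪 t) (a : Bool) (o : 𝒪) : Hist 𝒪 (t + 1) :=
  (Fin.snoc h.1 o, Fin.snoc h.2 a)

/-- The initial history consisting of a single observation. -/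
def initHist {𝒪 : Type} (o : 𝒪) : Hist 𝒪 0 := (fun _ => o, fun i => i.elim0)

/-- Full trajectory over horizon `T`: observations `o_0, …, o_T` (the last one being the
irrelevant next observation produced at the final stage), actions `a_0, …, a_{T-1}` and
rewards `r_0, …, r_{T-1}`. -/
abbrev Traj (𝒪 R : Type) (T : ℕ) : Type :=
  (Fin (T + 1) → 𝒪) × (Fin T → Bool) × (Fin T → R)

/-- The history prefix of a trajectory at time `t < T`. -/
def Traj.hist {𝒪 R : Type} {T : ℕ} (τ : Traj 𝒪 R T) (t : Fin T) : Hist 𝒪 t :=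
  (fun i => τ.1 (Fin.castLE (Nat.succ_le_succ t.isLt.le) i),
   fun i => τ.2.1 (Fin.castLE t.isLt.le i))

/-- Auxiliary value function, by recursion on the number `k` of remaining stages:
`Vaux q val a k t h` is the expected sum of the next `k` rewards under the global
policy `a`, starting from history `h` at time `t`. -/
noncomputable def Vaux {𝒪 R : Type} [Fintype 𝒪] [Fintype R]
    (q : (t : ℕ) → Hist 𝒪 t → Bool → R × 𝒪 → ℝ) (val : R → ℝ) (a : Bool) :
    (k : ℕ) → (t : ℕ) → Hist 𝒪 t → ℝ
  | 0, _, _ => 0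
  | k + 1, t, h =>
    ∑ ro : R × 𝒪, q t h a ro * (val ro.1 + Vaux q val a k (t + 1) (h.extend a ro.2))

/-- Value function `V_t^a(h) = E^a[Σ_{k=t}^{T-1} R_k | H_t = h]` over horizon `T`. -/
noncomputable def Vfun {𝒪 R : Type} [Fintype 𝒪] [Fintype R] (T : ℕ)
    (q : (t : ℕ) → Hist 𝒪 t → Bool → R × 𝒪 → ℝ) (val : R → ℝ) (a : Bool)
    (t : ℕ) (h : Hist 𝒪 t) : ℝ :=
  Vaux q val a (T - t) t h

/-- Conditional variance of the temporal-difference error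
`R_t + V_{t+1}^a(H_{t+1}) − V_t^a(h)` given `H_t = h` and `A_t = a`. -/
noncomputable def tdVar {𝒪 R : Type} [Fintype 𝒪] [Fintype R] (T : ℕ)
    (q : (t : ℕ) → Hist 𝒪 t → Bool → R × 𝒪 → ℝ) (val : R → ℝ) (a : Bool)
    (t : ℕ) (h : Hist 𝒪 t) : ℝ :=
  let x : R × 𝒪 → ℝ := fun ro =>
    val ro.1 + Vfun T q val a (t + 1) (h.extend a ro.2) - Vfun T q val a t h
  ∑ ro : R × 𝒪, q t h a ro * (x ro - ∑ ro' : R × 𝒪, q t h a ro' * x ro') ^ 2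

/-- Probability of a full trajectory under initial distribution `μ`, transitions `q` and
(history-dependent) behavior policy `π`. -/
noncomputable def trajProb {𝒪 R : Type} [Fintype 𝒪] [Fintype R] {T : ℕ} (μ : 𝒪 → ℝ)
    (q : (t : ℕ) → Hist 𝒪 t → Bool → R × 𝒪 → ℝ)
    (π : (t : ℕ) → Hist 𝒪 t → Bool → ℝ) (τ : Traj 𝒪 R T) : ℝ :=
  μ (τ.1 0) * ∏ t : Fin T,
    (π t (τ.hist t) (τ.2.1 t) * q t (τ.hist t) (τ.2.1 t) (τ.2.2 t, τ.1 t.succ))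

/-- The global (deterministic) policy that always plays action `a`. -/
def globPol (𝒪 : Type) (a : Bool) : (t : ℕ) → Hist 𝒪 t → Bool → ℝ :=
  fun _ _ b => if b = a then 1 else 0

/-- `σ_*²(o, a) = E^a[(Σ_t R_t − V_1^a(o))² | O_1 = o]`: conditional variance of the
cumulative reward given the initial observation, under the global policy `a`. -/
noncomputable def sstarSq {𝒪 R : Type} [Fintype 𝒪] [DecidableEq 𝒪] [Fintype R] (T : ℕ)
    (q : (t : ℕ) → Hist 𝒪 t → Bool → R × 𝒪 → ℝ) (val : R → ℝ)
    (o : 𝒪) (a : Bool) : ℝ :=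
  ∑ τ : Traj 𝒪 R T, trajProb (fun o' => if o' = o then 1 else 0) q (globPol 𝒪 a) τ *
    ((∑ t : Fin T, val (τ.2.2 t)) - Vfun T q val a 0 (initHist o)) ^ 2

/-- The `(a, t)` summand of the sequential-importance-sampling part of the efficiency
bound: `E^{π^b}[σ_t²(H_t, a) Π_{k≤t} 1(A_k = a)/π_k^b(a|H_k)²]`, with the convention
that a summand is `0` on the event that `A_k ≠ a` for some `k ≤ t`. -/
noncomputable def isTerm {𝒪 R : Type} [Fintype 𝒪] [Fintype R] (T : ℕ) (μ : 𝒪 → ℝ)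
    (q : (t : ℕ) → Hist 𝒪 t → Bool → R × 𝒪 → ℝ) (val : R → ℝ)
    (πb : (t : ℕ) → Hist 𝒪 t → Bool → ℝ) (a : Bool) (t : Fin T) : ℝ :=
  ∑ τ : Traj 𝒪 R T, trajProb μ q πb τ * tdVar T q val a t (τ.hist t) *
    ∏ k : Fin T,
      if (k : ℕ) ≤ (t : ℕ) then
        (if τ.2.1 k = a then ((πb k (τ.hist k) a) ^ 2)⁻¹ else 0)
      else 1

/-- `Var_{O_1∼μ}(V_1^1(O_1) − V_1^0(O_1))`. -/
noncomputable def varInit {𝒪 R : Type} [Fintype 𝒪] [Fintype R] (T : ℕ) (μ : 𝒪 → ℝ)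
    (q : (t : ℕ) → Hist 𝒪 t → Bool → R × 𝒪 → ℝ) (val : R → ℝ) : ℝ :=
  ∑ o : 𝒪, μ o *
    ((Vfun T q val true 0 (initHist o) - Vfun T q val false 0 (initHist o))
      - ∑ o' : 𝒪, μ o' *
          (Vfun T q val true 0 (initHist o') - Vfun T q val false 0 (initHist o'))) ^ 2

/-- The efficiency bound `EB₁(π^b)` of Equation (3.1) of the paper. -/
noncomputable def EB1 {𝒪 R : Type} [Fintype 𝒪] [Fintype R] (T : ℕ) (μ : 𝒪 → ℝ)
    (q : (t : ℕ) → Hist 𝒪 t → Bool → R × 𝒪 → ℝ) (val : R → ℝ)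
    (πb : (t : ℕ) → Hist 𝒪 t → Bool → ℝ) : ℝ :=
  ((T : ℝ) ^ 2)⁻¹ * (∑ a : Bool, ∑ t : Fin T, isTerm T μ q val πb a t)
    + ((T : ℝ) ^ 2)⁻¹ * varInit T μ q val

/-- The proposed optimal design `π^{b*}`: randomize the initial action with
probabilities proportional to `σ_*(O_1, a)`, then repeat the initial action forever. -/
noncomputable def piStar {𝒪 R : Type} [Fintype 𝒪] [DecidableEq 𝒪] [Fintype R] (T : ℕ)
    (q : (t : ℕ) → Hist 𝒪 t → Bool → R × 𝒪 → ℝ) (val : R → ℝ) :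
    (t : ℕ) → Hist 𝒪 t → Bool → ℝ :=
  fun t h b =>
    if ht : t = 0 then
      Real.sqrt (sstarSq T q val (h.1 0) b) /
        (Real.sqrt (sstarSq T q val (h.1 0) false) + Real.sqrt (sstarSq T q val (h.1 0) true))
    else if b = h.2 ⟨0, Nat.pos_of_ne_zero ht⟩ then 1 else 0

set_option linter.unusedSectionVars false
section Proof
variable {𝒪 R : Type} [Fintype 𝒪] [DecidableEq 𝒪] [Fintype R]

lemma snoc_lt {n : ℕ} {α : Type} (p : Fin n → α) (x : α) {k : ℕ} (hk : k < n)
    (hk' : k < n + 1) :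
    @Fin.snoc n (fun _ => α) p x ⟨k, hk'⟩ = p ⟨k, hk⟩ := by
  have h : (⟨k, hk'⟩ : Fin (n+1)) = Fin.castSucc ⟨k, hk⟩ := rfl
  rw [h, Fin.snoc_castSucc]

lemma snoc_last' {n : ℕ} {α : Type} (p : Fin n → α) (x : α) (h : n < n + 1) :
    @Fin.snoc n (fun _ => α) p x ⟨n, h⟩ = x := by
  have h2 : (⟨n, h⟩ : Fin (n+1)) = Fin.last n := rfl
  rw [h2, Fin.snoc_last]

def fullHist {T : ℕ} (τ : Traj 𝒪 R T) : Hist 𝒪 T := (τ.1, τ.2.1)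

def resTo {T : ℕ} (m : ℕ) (h : m ≤ T) (τ : Traj 𝒪 R T) : Traj 𝒪 R m :=
  (fun i => τ.1 (Fin.castLE (Nat.succ_le_succ h) i),
   fun i => τ.2.1 (Fin.castLE h i),
   fun i => τ.2.2 (Fin.castLE h i))

def trExt {T : ℕ} (τ : Traj 𝒪 R T) (b : Bool) (ro : R × 𝒪) : Traj 𝒪 R (T+1) :=
  (Fin.snoc τ.1 ro.2, Fin.snoc τ.2.1 b, Fin.snoc τ.2.2 ro.1)

lemma resTo_self {T : ℕ} (h : T ≤ T) (τ : Traj 𝒪 R T) : resTo T h τ = τ := rfl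

lemma hist_resTo {T m : ℕ} (h : m ≤ T) (τ : Traj 𝒪 R T) (k : Fin m) :
    (resTo m h τ).hist k = τ.hist (Fin.castLE h k) := rfl

lemma fullHist_resTo {T : ℕ} (τ : Traj 𝒪 R T) (t : Fin T) (hs : (t:ℕ) ≤ T) :
    fullHist (resTo (t : ℕ) hs τ) = τ.hist t := rfl

lemma resTo_trExt {T m : ℕ} (h : m ≤ T) (h' : m ≤ T + 1) (τ : Traj 𝒪 R T) (b : Bool)
    (ro : R × 𝒪) : resTo m h' (trExt τ b ro) = resTo m h τ := by
  refine Prod.ext (funext fun i => ?_) (Prod.ext (funext fun i => ?_) (funext fun i => ?_))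
  · exact snoc_lt (k := (i:ℕ)) τ.1 ro.2 (by omega) (by omega)
  · exact snoc_lt (k := (i:ℕ)) τ.2.1 b (by omega) (by omega)
  · exact snoc_lt (k := (i:ℕ)) τ.2.2 ro.1 (by omega) (by omega)

lemma trExt_obs {T : ℕ} (τ : Traj 𝒪 R T) (b : Bool) (ro : R × 𝒪) (hl : T + 1 < T + 2) :
    (trExt τ b ro).1 ⟨T + 1, hl⟩ = ro.2 := snoc_last' τ.1 ro.2 hl

lemma trExt_act {T : ℕ} (τ : Traj 𝒪 R T) (b : Bool) (ro : R × 𝒪) (hl : T < T + 1) :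
    (trExt τ b ro).2.1 ⟨T, hl⟩ = b := snoc_last' τ.2.1 b hl

lemma trExt_rew {T : ℕ} (τ : Traj 𝒪 R T) (b : Bool) (ro : R × 𝒪) (hl : T < T + 1) :
    (trExt τ b ro).2.2 ⟨T, hl⟩ = ro.1 := snoc_last' τ.2.2 ro.1 hl

lemma trExt_act_lt {T : ℕ} (τ : Traj 𝒪 R T) (b : Bool) (ro : R × 𝒪) {k : ℕ} (hk : k < T)
    (hk' : k < T + 1) : (trExt τ b ro).2.1 ⟨k, hk'⟩ = τ.2.1 ⟨k, hk⟩ :=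
  snoc_lt τ.2.1 b hk hk'

lemma trExt_rew_lt {T : ℕ} (τ : Traj 𝒪 R T) (b : Bool) (ro : R × 𝒪) {k : ℕ} (hk : k < T)
    (hk' : k < T + 1) : (trExt τ b ro).2.2 ⟨k, hk'⟩ = τ.2.2 ⟨k, hk⟩ :=
  snoc_lt τ.2.2 ro.1 hk hk'

lemma trExt_obs_lt {T : ℕ} (τ : Traj 𝒪 R T) (b : Bool) (ro : R × 𝒪) {k : ℕ} (hk : k < T + 1)
    (hk' : k < T + 2) : (trExt τ b ro).1 ⟨k, hk'⟩ = τ.1 ⟨k, hk⟩ :=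
  snoc_lt τ.1 ro.2 hk hk'

lemma hist_trExt {T : ℕ} (τ : Traj 𝒪 R T) (b : Bool) (ro : R × 𝒪) (k : Fin T) :
    (trExt τ b ro).hist (Fin.castSucc k) = τ.hist k := by
  refine Prod.ext (funext fun i => ?_) (funext fun i => ?_)
  · exact snoc_lt (k := (i:ℕ)) τ.1 ro.2 (by omega) (by omega)
  · exact snoc_lt (k := (i:ℕ)) τ.2.1 b (by omega) (by omega)

lemma hist_trExt_last {T : ℕ} (τ : Traj 𝒪 R T) (b : Bool) (ro : R × 𝒪) :
    (trExt τ b ro).hist (Fin.last T) = fullHist τ := by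
  refine Prod.ext (funext fun i => ?_) (funext fun i => ?_)
  · exact snoc_lt (k := (i:ℕ)) τ.1 ro.2 (by omega) (by omega)
  · exact snoc_lt (k := (i:ℕ)) τ.2.1 b (by omega) (by omega)

def extEquiv (T : ℕ) : Traj 𝒪 R T × Bool × (R × 𝒪) ≃ Traj 𝒪 R (T+1) :=
    { toFun := fun x => trExt x.1 x.2.1 x.2.2
      invFun := fun τ => (resTo T (Nat.le_succ T) τ, τ.2.1 (Fin.last T),
        (τ.2.2 (Fin.last T), τ.1 (Fin.last (T+1))))
      left_inv := by
        rintro ⟨σ, b, ro⟩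
        refine Prod.ext ?_ (Prod.ext ?_ (Prod.ext ?_ ?_))
        · show resTo T (Nat.le_succ T) (trExt σ b ro) = σ
          rw [resTo_trExt le_rfl (Nat.le_succ T) σ b ro, resTo_self]
        · exact trExt_act σ b ro (Nat.lt_succ_self T)
        · exact trExt_rew σ b ro (Nat.lt_succ_self T)
        · exact trExt_obs σ b ro (Nat.lt_succ_self (T+1))
      right_inv := by
        intro τ
        show trExt (resTo T (Nat.le_succ T) τ) (τ.2.1 (Fin.last T))
          (τ.2.2 (Fin.last T), τ.1 (Fin.last (T+1))) = τ
        refine Prod.ext (funext fun i => ?_) (Prod.ext (funext fun i => ?_)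
          (funext fun i => ?_))
        · exact congrFun (Fin.snoc_init_self τ.1) i
        · exact congrFun (Fin.snoc_init_self τ.2.1) i
        · exact congrFun (Fin.snoc_init_self τ.2.2) i }

/-- Splitting a sum over trajectories of horizon `T+1`. -/
lemma sum_trExt {T : ℕ} (f : Traj 𝒪 R (T+1) → ℝ) :
    ∑ τ : Traj 𝒪 R (T+1), f τ
      = ∑ σ : Traj 𝒪 R T, ∑ b : Bool, ∑ ro : R × 𝒪, f (trExt σ b ro) := by
  calc ∑ τ : Traj 𝒪 R (T+1), f τ
      = ∑ x : Traj 𝒪 R T × Bool × (R × 𝒪), f (extEquiv T x) := (Equiv.sum_comp (extEquiv T) f).symm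
    _ = ∑ σ : Traj 𝒪 R T, ∑ y : Bool × (R × 𝒪), f (extEquiv T (σ, y)) := Fintype.sum_prod_type _
    _ = ∑ σ : Traj 𝒪 R T, ∑ b : Bool, ∑ ro : R × 𝒪, f (trExt σ b ro) :=
        Finset.sum_congr rfl fun σ _ => Fintype.sum_prod_type _

variable (μ : 𝒪 → ℝ) (q : (t : ℕ) → Hist 𝒪 t → Bool → R × 𝒪 → ℝ)
    (π : (t : ℕ) → Hist 𝒪 t → Bool → ℝ)

lemma trajProb_trExt {T : ℕ} (σ : Traj 𝒪 R T) (b : Bool) (ro : R × 𝒪) :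
    trajProb μ q π (trExt σ b ro)
      = trajProb μ q π σ * (π T (fullHist σ) b * q T (fullHist σ) b ro) := by
  unfold trajProb
  rw [Fin.prod_univ_castSucc]
  have h0 : (trExt σ b ro).1 0 = σ.1 0 := trExt_obs_lt σ b ro (Nat.succ_pos T) _
  have hprod : (∏ i : Fin T,
      (π (↑(Fin.castSucc i)) ((trExt σ b ro).hist (Fin.castSucc i))
          ((trExt σ b ro).2.1 (Fin.castSucc i)) *
        q (↑(Fin.castSucc i)) ((trExt σ b ro).hist (Fin.castSucc i))
          ((trExt σ b ro).2.1 (Fin.castSucc i))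
          ((trExt σ b ro).2.2 (Fin.castSucc i), (trExt σ b ro).1 (Fin.castSucc i).succ)))
      = ∏ t : Fin T, (π (↑t) (σ.hist t) (σ.2.1 t) *
          q (↑t) (σ.hist t) (σ.2.1 t) (σ.2.2 t, σ.1 t.succ)) := by
    refine Finset.prod_congr rfl fun k _ => ?_
    show (π (↑k) ((trExt σ b ro).hist (Fin.castSucc k)) ((trExt σ b ro).2.1 (Fin.castSucc k)) *
        q (↑k) ((trExt σ b ro).hist (Fin.castSucc k)) ((trExt σ b ro).2.1 (Fin.castSucc k))
          ((trExt σ b ro).2.2 (Fin.castSucc k), (trExt σ b ro).1 (Fin.castSucc k).succ)) = _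
    have h1 := hist_trExt σ b ro k
    have h2 : (trExt σ b ro).2.1 (Fin.castSucc k) = σ.2.1 k :=
      trExt_act_lt σ b ro k.isLt _
    have h3 : (trExt σ b ro).2.2 (Fin.castSucc k) = σ.2.2 k :=
      trExt_rew_lt σ b ro k.isLt _
    have h4 : (trExt σ b ro).1 (Fin.castSucc k).succ = σ.1 k.succ :=
      trExt_obs_lt σ b ro k.succ.isLt _
    rw [h1, h2, h3, h4]
  have hlast : (π (↑(Fin.last T)) ((trExt σ b ro).hist (Fin.last T))
        ((trExt σ b ro).2.1 (Fin.last T)) *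
      q (↑(Fin.last T)) ((trExt σ b ro).hist (Fin.last T)) ((trExt σ b ro).2.1 (Fin.last T))
        ((trExt σ b ro).2.2 (Fin.last T), (trExt σ b ro).1 (Fin.last T).succ))
      = π T (fullHist σ) b * q T (fullHist σ) b ro := by
    show (π T ((trExt σ b ro).hist (Fin.last T)) ((trExt σ b ro).2.1 (Fin.last T)) *
      q T ((trExt σ b ro).hist (Fin.last T)) ((trExt σ b ro).2.1 (Fin.last T))
        ((trExt σ b ro).2.2 (Fin.last T), (trExt σ b ro).1 (Fin.last T).succ)) = _
    have h1 := hist_trExt_last σ b ro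
    have h2 : (trExt σ b ro).2.1 (Fin.last T) = b := trExt_act σ b ro _
    have h3 : (trExt σ b ro).2.2 (Fin.last T) = ro.1 := trExt_rew σ b ro _
    have h4 : (trExt σ b ro).1 (Fin.last T).succ = ro.2 := trExt_obs σ b ro _
    rw [h1, h2, h3, h4]
  rw [hprod, hlast, h0]
  ring

/-- Splitting the expectation of `Φ` at the last step. -/
lemma splitsum {T : ℕ} (Φ : Traj 𝒪 R (T+1) → ℝ) :
    ∑ τ : Traj 𝒪 R (T+1), trajProb μ q π τ * Φ τ
      = ∑ σ : Traj 𝒪 R T, trajProb μ q π σ *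
          ∑ b : Bool, π T (fullHist σ) b *
            ∑ ro : R × 𝒪, q T (fullHist σ) b ro * Φ (trExt σ b ro) := by
  rw [sum_trExt (fun τ => trajProb μ q π τ * Φ τ)]
  refine Finset.sum_congr rfl fun σ _ => ?_
  rw [Finset.mul_sum]
  refine Finset.sum_congr rfl fun b _ => ?_
  rw [Finset.mul_sum, Finset.mul_sum]
  refine Finset.sum_congr rfl fun ro _ => ?_
  rw [trajProb_trExt]
  ring

/-- Iterated tower property. -/
lemma town {m : ℕ} : ∀ {T : ℕ} (hm : m ≤ T)
    (hπ : ∀ k, m ≤ k → k < T → ∀ h : Hist 𝒪 k, π k h false + π k h true = 1)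
    (hq : ∀ k, m ≤ k → k < T → ∀ (h : Hist 𝒪 k) (b : Bool), ∑ ro : R × 𝒪, q k h b ro = 1)
    (G : Traj 𝒪 R m → ℝ),
    ∑ τ : Traj 𝒪 R T, trajProb μ q π τ * G (resTo m hm τ)
      = ∑ σ : Traj 𝒪 R m, trajProb μ q π σ * G σ := by
  intro T
  induction T with
  | zero => intro hm _ _ G
            have h0 : m = 0 := Nat.le_zero.mp hm
            subst h0
            rfl
  | succ T ih =>
    intro hm hπ hq G
    rcases Nat.lt_or_ge m (T+1) with hlt | hge
    · have hm' : m ≤ T := Nat.lt_succ_iff.mp hlt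
      rw [splitsum μ q π (fun τ => G (resTo m hm τ))]
      have : ∀ σ : Traj 𝒪 R T, (∑ b : Bool, π T (fullHist σ) b *
            ∑ ro : R × 𝒪, q T (fullHist σ) b ro * G (resTo m hm (trExt σ b ro)))
          = G (resTo m hm' σ) := by
        intro σ
        have hfix : ∀ b ro, G (resTo m hm (trExt σ b ro)) = G (resTo m hm' σ) := by
          intro b ro; rw [resTo_trExt hm' hm σ b ro]
        calc (∑ b : Bool, π T (fullHist σ) b *
              ∑ ro : R × 𝒪, q T (fullHist σ) b ro * G (resTo m hm (trExt σ b ro)))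
            = ∑ b : Bool, π T (fullHist σ) b * G (resTo m hm' σ) := by
              refine Finset.sum_congr rfl fun b _ => ?_
              rw [show (∑ ro : R × 𝒪, q T (fullHist σ) b ro * G (resTo m hm (trExt σ b ro)))
                  = ∑ ro : R × 𝒪, q T (fullHist σ) b ro * G (resTo m hm' σ) from
                  Finset.sum_congr rfl fun ro _ => by rw [hfix b ro],
                ← Finset.sum_mul, hq T hm' (Nat.lt_succ_self T) (fullHist σ) b, one_mul]
          _ = G (resTo m hm' σ) := by
              rw [← Finset.sum_mul, Fintype.sum_bool, add_comm,
                hπ T hm' (Nat.lt_succ_self T) (fullHist σ), one_mul]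
      rw [Finset.sum_congr rfl fun σ _ => by rw [this σ]]
      exact ih hm' (fun k h1 h2 => hπ k h1 (Nat.lt_succ_of_lt h2))
        (fun k h1 h2 => hq k h1 (Nat.lt_succ_of_lt h2)) G
    · have hme : m = T + 1 := le_antisymm hm hge
      subst hme
      exact Finset.sum_congr rfl fun τ _ => rfl

variable (val : R → ℝ) (a : Bool)

lemma vfun_last {T : ℕ} (h : Hist 𝒪 T) : Vfun T q val a T h = 0 := by
  unfold Vfun
  rw [Nat.sub_self]
  rfl

lemma vfun_succ {T t : ℕ} (ht : t < T) (h : Hist 𝒪 t) :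
    Vfun T q val a t h
      = ∑ ro : R × 𝒪, q t h a ro * (val ro.1 + Vfun T q val a (t+1) (h.extend a ro.2)) := by
  unfold Vfun
  rw [show T - t = (T - (t+1)) + 1 from by omega]
  rfl

lemma bellman {T t : ℕ} (ht : t < T) (h : Hist 𝒪 t)
    (hq1 : ∑ ro : R × 𝒪, q t h a ro = 1) :
    ∑ ro : R × 𝒪, q t h a ro *
      (val ro.1 + Vfun T q val a (t+1) (h.extend a ro.2) - Vfun T q val a t h) = 0 := by
  have : ∀ ro : R × 𝒪, q t h a ro *
      (val ro.1 + Vfun T q val a (t+1) (h.extend a ro.2) - Vfun T q val a t h)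
      = q t h a ro * (val ro.1 + Vfun T q val a (t+1) (h.extend a ro.2))
        - q t h a ro * Vfun T q val a t h := fun ro => by ring
  rw [Finset.sum_congr rfl fun ro _ => this ro, Finset.sum_sub_distrib,
    ← vfun_succ q val a ht h, ← Finset.sum_mul, hq1, one_mul, sub_self]

lemma tdVar_expand {T t : ℕ} (ht : t < T) (h : Hist 𝒪 t)
    (hq1 : ∑ ro : R × 𝒪, q t h a ro = 1) :
    tdVar T q val a t h = ∑ ro : R × 𝒪, q t h a ro *
      (val ro.1 + Vfun T q val a (t+1) (h.extend a ro.2) - Vfun T q val a t h) ^ 2 := by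
  show (∑ ro : R × 𝒪, q t h a ro *
      ((val ro.1 + Vfun T q val a (t+1) (h.extend a ro.2) - Vfun T q val a t h)
        - ∑ ro' : R × 𝒪, q t h a ro' *
            (val ro'.1 + Vfun T q val a (t+1) (h.extend a ro'.2) - Vfun T q val a t h)) ^ 2)
    = _
  rw [bellman q val a ht h hq1]
  simp only [sub_zero]

lemma tdVar_nonneg {T t : ℕ} (h' : Hist 𝒪 t) (hqnn : ∀ ro : R × 𝒪, 0 ≤ q t h' a ro) :
    0 ≤ tdVar T q val a t h' := by
  refine Finset.sum_nonneg fun ro _ => mul_nonneg (hqnn ro) (sq_nonneg _)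

lemma trajProb_nonneg {T : ℕ} (hμ : ∀ o, 0 ≤ μ o)
    (hπ : ∀ (k : Fin T) (h : Hist 𝒪 k) (b : Bool), 0 ≤ π k h b)
    (hqnn : ∀ (k : Fin T) (h : Hist 𝒪 k) (b : Bool) (ro : R × 𝒪), 0 ≤ q k h b ro)
    (τ : Traj 𝒪 R T) : 0 ≤ trajProb μ q π τ :=
  mul_nonneg (hμ _) (Finset.prod_nonneg fun k _ =>
    mul_nonneg (hπ k _ _) (hqnn k _ _ _))

lemma glob_nonneg : ∀ (k : ℕ) (h : Hist 𝒪 k) (b : Bool), 0 ≤ globPol 𝒪 a k h b := by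
  intro k h b
  unfold globPol
  split <;> norm_num

lemma glob_sum : ∀ (k : ℕ) (h : Hist 𝒪 k), globPol 𝒪 a k h false + globPol 𝒪 a k h true = 1 := by
  intro k h
  unfold globPol
  cases a <;> simp

lemma trajProb_glob_zero {T : ℕ} (τ : Traj 𝒪 R T) (k : Fin T) (hk : τ.2.1 k ≠ a) :
    trajProb μ q (globPol 𝒪 a) τ = 0 := by
  unfold trajProb
  refine mul_eq_zero_of_right _ (Finset.prod_eq_zero (Finset.mem_univ k) ?_)
  unfold globPol
  rw [if_neg hk, zero_mul]

lemma mul_inv_sq' (x : ℝ) : x * (x ^ 2)⁻¹ = x⁻¹ := by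
  rcases eq_or_ne x 0 with h | h
  · simp [h]
  · rw [sq, mul_inv, ← mul_assoc, mul_inv_cancel₀ h, one_mul]

lemma prod_le_trunc {T t : ℕ} (ht : t + 1 ≤ T) (f : Fin T → ℝ) :
    (∏ k : Fin T, if (k : ℕ) ≤ t then f k else 1)
      = ∏ k : Fin (t + 1), f (Fin.castLE ht k) := by
  rw [← Finset.prod_filter]
  refine Finset.prod_bij' (fun k hk => (⟨(k : ℕ), by
      simp only [Finset.mem_filter] at hk; omega⟩ : Fin (t+1)))
    (fun k _ => Fin.castLE ht k) ?_ ?_ ?_ ?_ ?_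
  · intro k hk; exact Finset.mem_univ _
  · intro k _
    simp only [Finset.mem_filter, Finset.mem_univ, true_and]
    exact Nat.lt_succ_iff.mp k.isLt
  · intro k hk; rfl
  · intro k hk; rfl
  · intro k hk; rfl

lemma trExt_act_cs {T : ℕ} (τ : Traj 𝒪 R T) (b : Bool) (ro : R × 𝒪) (k : Fin T) :
    (trExt τ b ro).2.1 (Fin.castSucc k) = τ.2.1 k :=
  trExt_act_lt τ b ro k.isLt _

/-- Convert an importance-weighted behaviour probability into the global-policy
probability. -/
lemma prob_convert {T' : ℕ} (πb : (t : ℕ) → Hist 𝒪 t → Bool → ℝ) (σ : Traj 𝒪 R T') :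
    trajProb μ q πb σ * ∏ k : Fin T', (if σ.2.1 k = a then ((πb k (σ.hist k) a) ^ 2)⁻¹ else 0)
      = trajProb μ q (globPol 𝒪 a) σ *
          ∏ k : Fin T', (if σ.2.1 k = a then (πb k (σ.hist k) a)⁻¹ else 0) := by
  unfold trajProb
  rw [mul_assoc, mul_assoc, ← Finset.prod_mul_distrib, ← Finset.prod_mul_distrib]
  congr 1
  refine Finset.prod_congr rfl fun k _ => ?_
  by_cases hk : σ.2.1 k = a
  · rw [if_pos hk, if_pos hk, hk]
    unfold globPol
    rw [if_pos rfl, one_mul]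
    rw [show πb (↑k) (σ.hist k) a * q (↑k) (σ.hist k) a (σ.2.2 k, σ.1 k.succ) *
        ((πb (↑k) (σ.hist k) a) ^ 2)⁻¹
      = q (↑k) (σ.hist k) a (σ.2.2 k, σ.1 k.succ) * (πb (↑k) (σ.hist k) a * ((πb (↑k) (σ.hist k) a) ^ 2)⁻¹) from by ring, mul_inv_sq']
  · rw [if_neg hk, if_neg hk]
    unfold globPol
    rw [if_neg hk]
    ring

lemma isTerm_eq {T : ℕ} (πb : (t : ℕ) → Hist 𝒪 t → Bool → ℝ)
    (hπs : ∀ k, k < T → ∀ h : Hist 𝒪 k, πb k h false + πb k h true = 1)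
    (hq1 : ∀ k, k < T → ∀ (h : Hist 𝒪 k) (b : Bool), ∑ ro : R × 𝒪, q k h b ro = 1)
    (t : Fin T) :
    isTerm T μ q val πb a t
      = ∑ σ : Traj 𝒪 R (t : ℕ), trajProb μ q (globPol 𝒪 a) σ *
          (tdVar T q val a t (fullHist σ) * ((πb t (fullHist σ) a)⁻¹ *
            ∏ k : Fin (t : ℕ), (if σ.2.1 k = a then (πb k (σ.hist k) a)⁻¹ else 0))) := by
  have ht : (t : ℕ) + 1 ≤ T := t.isLt
  set G : Traj 𝒪 R ((t : ℕ) + 1) → ℝ := fun σ =>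
    tdVar T q val a t (fullHist (resTo (t : ℕ) (Nat.le_succ (t : ℕ)) σ)) *
      ∏ k : Fin ((t : ℕ) + 1), (if σ.2.1 k = a then ((πb k (σ.hist k) a) ^ 2)⁻¹ else 0)
    with hG
  have step1 : isTerm T μ q val πb a t
      = ∑ τ : Traj 𝒪 R T, trajProb μ q πb τ * G (resTo ((t : ℕ) + 1) ht τ) := by
    unfold isTerm
    refine Finset.sum_congr rfl fun τ _ => ?_
    rw [mul_assoc]
    congr 1
    rw [prod_le_trunc ht (fun k => if τ.2.1 k = a then ((πb k (τ.hist k) a) ^ 2)⁻¹ else 0),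
      hG]
    rfl
  have step2 : ∑ τ : Traj 𝒪 R T, trajProb μ q πb τ * G (resTo ((t : ℕ) + 1) ht τ)
      = ∑ σ : Traj 𝒪 R ((t : ℕ) + 1), trajProb μ q πb σ * G σ :=
    town μ q πb ht (fun k _ hk => hπs k hk) (fun k _ hk => hq1 k hk) G
  have step3 : ∑ σ : Traj 𝒪 R ((t : ℕ) + 1), trajProb μ q πb σ * G σ
      = ∑ σ : Traj 𝒪 R (t : ℕ), trajProb μ q πb σ *
          ∑ b : Bool, πb (t : ℕ) (fullHist σ) b *
            ∑ ro : R × 𝒪, q (t : ℕ) (fullHist σ) b ro * G (trExt σ b ro) :=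
    splitsum μ q πb G
  have hGext : ∀ (σ : Traj 𝒪 R (t : ℕ)) (b : Bool) (ro : R × 𝒪),
      G (trExt σ b ro) = tdVar T q val a t (fullHist σ) *
        ((∏ k : Fin (t : ℕ), (if σ.2.1 k = a then ((πb k (σ.hist k) a) ^ 2)⁻¹ else 0)) *
          (if b = a then ((πb (t : ℕ) (fullHist σ) a) ^ 2)⁻¹ else 0)) := by
    intro σ b ro
    simp only [hG]
    have hres : resTo (t : ℕ) (Nat.le_succ (t : ℕ)) (trExt σ b ro) = σ := by
      rw [resTo_trExt le_rfl (Nat.le_succ (t : ℕ)) σ b ro, resTo_self]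
    rw [hres]
    congr 1
    rw [Fin.prod_univ_castSucc]
    congr 1
    · refine Finset.prod_congr rfl fun k _ => ?_
      show (if (trExt σ b ro).2.1 (Fin.castSucc k) = a
          then ((πb (↑k) ((trExt σ b ro).hist (Fin.castSucc k)) a) ^ 2)⁻¹ else 0)
        = (if σ.2.1 k = a then ((πb (↑k) (σ.hist k) a) ^ 2)⁻¹ else 0)
      rw [trExt_act_cs σ b ro k, hist_trExt σ b ro k]
    · show (if (trExt σ b ro).2.1 (Fin.last (t : ℕ)) = a
          then ((πb (↑(t : ℕ)) ((trExt σ b ro).hist (Fin.last (t : ℕ))) a) ^ 2)⁻¹ else 0)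
        = (if b = a then ((πb (t : ℕ) (fullHist σ) a) ^ 2)⁻¹ else 0)
      have h2 : (trExt σ b ro).2.1 (Fin.last (t : ℕ)) = b := trExt_act σ b ro _
      rw [h2, hist_trExt_last σ b ro]
  have step4 : ∀ σ : Traj 𝒪 R (t : ℕ),
      (∑ b : Bool, πb (t : ℕ) (fullHist σ) b *
        ∑ ro : R × 𝒪, q (t : ℕ) (fullHist σ) b ro * G (trExt σ b ro))
      = (tdVar T q val a t (fullHist σ) * (πb (t : ℕ) (fullHist σ) a)⁻¹) *
          ∏ k : Fin (t : ℕ), (if σ.2.1 k = a then ((πb k (σ.hist k) a) ^ 2)⁻¹ else 0) := by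
    intro σ
    have hin : ∀ b : Bool, (∑ ro : R × 𝒪, q (t : ℕ) (fullHist σ) b ro * G (trExt σ b ro))
        = tdVar T q val a t (fullHist σ) *
            ((∏ k : Fin (t : ℕ), (if σ.2.1 k = a then ((πb k (σ.hist k) a) ^ 2)⁻¹ else 0)) *
              (if b = a then ((πb (t : ℕ) (fullHist σ) a) ^ 2)⁻¹ else 0)) := by
      intro b
      rw [Finset.sum_congr rfl fun ro _ => by rw [hGext σ b ro], ← Finset.sum_mul,
        hq1 (t : ℕ) t.isLt (fullHist σ) b, one_mul]
    rw [Finset.sum_congr rfl fun b _ => by rw [hin b]]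
    simp only [mul_ite, mul_zero, Finset.sum_ite_eq', Finset.mem_univ, if_true]
    rw [show πb (↑t) (fullHist σ) a * (tdVar T q val a (↑t) (fullHist σ) *
        ((∏ k : Fin (t : ℕ), (if σ.2.1 k = a then ((πb k (σ.hist k) a) ^ 2)⁻¹ else 0)) *
          ((πb (↑t) (fullHist σ) a) ^ 2)⁻¹))
      = (tdVar T q val a (↑t) (fullHist σ) *
          (πb (↑t) (fullHist σ) a * ((πb (↑t) (fullHist σ) a) ^ 2)⁻¹)) *
          (∏ k : Fin (t : ℕ), (if σ.2.1 k = a then ((πb k (σ.hist k) a) ^ 2)⁻¹ else 0))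
      from by ring, mul_inv_sq']
  rw [step1, step2, step3, Finset.sum_congr rfl fun σ _ => by rw [step4 σ]]
  have step5 : ∀ σ : Traj 𝒪 R (t : ℕ),
      trajProb μ q πb σ * ((tdVar T q val a t (fullHist σ) * (πb (t : ℕ) (fullHist σ) a)⁻¹) *
          ∏ k : Fin (t : ℕ), (if σ.2.1 k = a then ((πb k (σ.hist k) a) ^ 2)⁻¹ else 0))
      = trajProb μ q (globPol 𝒪 a) σ *
          (tdVar T q val a t (fullHist σ) * ((πb t (fullHist σ) a)⁻¹ *
            ∏ k : Fin (t : ℕ), (if σ.2.1 k = a then (πb k (σ.hist k) a)⁻¹ else 0))) := by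
    intro σ
    have hc := prob_convert μ q a πb σ
    calc trajProb μ q πb σ * ((tdVar T q val a t (fullHist σ) *
            (πb (t : ℕ) (fullHist σ) a)⁻¹) *
          ∏ k : Fin (t : ℕ), (if σ.2.1 k = a then ((πb k (σ.hist k) a) ^ 2)⁻¹ else 0))
        = (trajProb μ q πb σ *
            ∏ k : Fin (t : ℕ), (if σ.2.1 k = a then ((πb k (σ.hist k) a) ^ 2)⁻¹ else 0)) *
          (tdVar T q val a t (fullHist σ) * (πb (t : ℕ) (fullHist σ) a)⁻¹) := by ring
      _ = (trajProb μ q (globPol 𝒪 a) σ *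
            ∏ k : Fin (t : ℕ), (if σ.2.1 k = a then (πb k (σ.hist k) a)⁻¹ else 0)) *
          (tdVar T q val a t (fullHist σ) * (πb (t : ℕ) (fullHist σ) a)⁻¹) := by rw [hc]
      _ = _ := by ring
  exact Finset.sum_congr rfl fun σ _ => step5 σ

/-- Temporal-difference error at the last stage `s` of a horizon-`m` trajectory,
with value functions taken over the true horizon `T`. -/
noncomputable def DfnN (T s : ℕ) {m : ℕ} (hs : s < m) (σ : Traj 𝒪 R m) : ℝ :=
  val (σ.2.2 ⟨s, hs⟩) + Vfun T q val a (s + 1)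
      ((fullHist (resTo s hs.le σ)).extend (σ.2.1 ⟨s, hs⟩) (σ.1 ⟨s + 1, Nat.succ_lt_succ hs⟩))
    - Vfun T q val a s (fullHist (resTo s hs.le σ))

lemma DfnN_res {T m m' s : ℕ} (hs : s < m) (hm : m ≤ m') (hs' : s < m') (σ : Traj 𝒪 R m') :
    DfnN q val a T s hs (resTo m hm σ) = DfnN q val a T s hs' σ := rfl

lemma DfnN_ext {T m s : ℕ} (hs : s < m) (hs' : s < m + 1) (σ : Traj 𝒪 R m) (b : Bool)
    (ro : R × 𝒪) : DfnN q val a T s hs' (trExt σ b ro) = DfnN q val a T s hs σ := by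
  unfold DfnN
  rw [trExt_rew_lt σ b ro hs hs', trExt_act_lt σ b ro hs hs',
    trExt_obs_lt σ b ro (Nat.succ_lt_succ hs) _, resTo_trExt hs.le _ σ b ro]

lemma DfnN_ext_last {T m : ℕ} (σ : Traj 𝒪 R m) (b : Bool) (ro : R × 𝒪) :
    DfnN q val a T m (Nat.lt_succ_self m) (trExt σ b ro)
      = val ro.1 + Vfun T q val a (m + 1) ((fullHist σ).extend b ro.2)
          - Vfun T q val a m (fullHist σ) := by
  unfold DfnN
  rw [trExt_rew σ b ro _, trExt_act σ b ro _, trExt_obs σ b ro _,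
    resTo_trExt le_rfl _ σ b ro, resTo_self]

lemma vfun_ge {T t : ℕ} (h : T ≤ t) (h' : Hist 𝒪 t) : Vfun T q val a t h' = 0 := by
  unfold Vfun
  rw [Nat.sub_eq_zero_of_le h]
  rfl

lemma hist_zero {T : ℕ} (hT : 0 < T) (τ : Traj 𝒪 R T) :
    τ.hist ⟨0, hT⟩ = initHist (τ.1 0) := by
  refine Prod.ext (funext fun i => ?_) (funext fun i => i.elim0)
  have hiv : (i : ℕ) < 0 + 1 := i.isLt
  have h0 : i = ⟨0, Nat.lt_succ_self 0⟩ := Fin.ext (show (i : ℕ) = 0 by omega)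
  rw [h0]
  rfl

lemma hist_succ {T : ℕ} (τ : Traj 𝒪 R T) (t : Fin T) (h : (t : ℕ) + 1 < T) :
    (τ.hist t).extend (τ.2.1 t) (τ.1 t.succ) = τ.hist ⟨(t : ℕ) + 1, h⟩ := by
  refine Prod.ext (funext fun i => ?_) (funext fun i => ?_)
  · rcases Nat.lt_or_ge (i : ℕ) ((t : ℕ) + 1) with hi | hi
    · exact snoc_lt (k := (i : ℕ)) _ _ hi i.isLt
    · have hiv : (i : ℕ) < (t : ℕ) + 1 + 1 := i.isLt
      have h0 : i = ⟨(t : ℕ) + 1, Nat.lt_succ_self _⟩ := Fin.ext (show (i : ℕ) = (t : ℕ) + 1 by omega)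
      rw [h0]
      exact snoc_last' _ _ _
  · rcases Nat.lt_or_ge (i : ℕ) (t : ℕ) with hi | hi
    · exact snoc_lt (k := (i : ℕ)) _ _ hi i.isLt
    · have hiv : (i : ℕ) < (t : ℕ) + 1 := i.isLt
      have h0 : i = ⟨(t : ℕ), Nat.lt_succ_self _⟩ := Fin.ext (show (i : ℕ) = (t : ℕ) by omega)
      rw [h0]
      exact snoc_last' _ _ _

/-- Telescoping: the TD errors sum to the centred cumulative reward. -/
lemma sum_DfnN {T : ℕ} (hT : 0 < T) (τ : Traj 𝒪 R T) :
    ∑ t : Fin T, DfnN q val a T (t : ℕ) t.isLt τ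
      = (∑ t : Fin T, val (τ.2.2 t)) - Vfun T q val a 0 (initHist (τ.1 0)) := by
  set f : ℕ → ℝ := fun n => if hn : n < T then Vfun T q val a n (τ.hist ⟨n, hn⟩) else 0
    with hf
  have hflt : ∀ (n : ℕ) (hn : n < T), f n = Vfun T q val a n (τ.hist ⟨n, hn⟩) :=
    fun n hn => dif_pos hn
  have hfge : ∀ (n : ℕ), T ≤ n → f n = 0 := fun n hn => dif_neg (by omega)
  have hstep : ∀ t : Fin T, DfnN q val a T (t : ℕ) t.isLt τ
      = val (τ.2.2 t) + (f ((t : ℕ) + 1) - f (t : ℕ)) := by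
    intro t
    unfold DfnN
    rw [hflt (t : ℕ) t.isLt]
    have hv : Vfun T q val a ((t : ℕ) + 1)
        ((fullHist (resTo (t : ℕ) t.isLt.le τ)).extend (τ.2.1 ⟨(t : ℕ), t.isLt⟩)
          (τ.1 ⟨(t : ℕ) + 1, Nat.succ_lt_succ t.isLt⟩)) = f ((t : ℕ) + 1) := by
      rcases Nat.lt_or_ge ((t : ℕ) + 1) T with h1 | h1
      · rw [hflt _ h1]
        rw [show (fullHist (resTo (t : ℕ) t.isLt.le τ)).extend (τ.2.1 ⟨(t : ℕ), t.isLt⟩)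
            (τ.1 ⟨(t : ℕ) + 1, Nat.succ_lt_succ t.isLt⟩)
          = (τ.hist t).extend (τ.2.1 t) (τ.1 t.succ) from rfl, hist_succ τ t h1]
      · rw [hfge _ h1, vfun_ge q val a h1]
    rw [hv]
    ring_nf
    rfl
  rw [Finset.sum_congr rfl fun t _ => hstep t, Finset.sum_add_distrib]
  congr 1
  rw [Fin.sum_univ_eq_sum_range (fun n => f (n + 1) - f n) T, Finset.sum_range_sub f T,
    hfge T le_rfl, hflt 0 hT, hist_zero hT τ]
  ring

/-- Cross-term expectation vanishes. -/
lemma cross_zero {T m : ℕ} (ν : 𝒪 → ℝ) (F : Traj 𝒪 R m → ℝ)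
    (hq1 : ∀ (h : Hist 𝒪 m) (b : Bool), ∑ ro : R × 𝒪, q m h b ro = 1) (hm : m < T) :
    ∑ τ : Traj 𝒪 R (m + 1), trajProb ν q (globPol 𝒪 a) τ *
      (F (resTo m (Nat.le_succ m) τ) * DfnN q val a T m (Nat.lt_succ_self m) τ) = 0 := by
  rw [splitsum]
  refine Finset.sum_eq_zero fun σ _ => ?_
  have hin : ∀ b : Bool, (∑ ro : R × 𝒪, q m (fullHist σ) b ro *
      (F (resTo m (Nat.le_succ m) (trExt σ b ro)) *
        DfnN q val a T m (Nat.lt_succ_self m) (trExt σ b ro)))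
      = F σ * ∑ ro : R × 𝒪, q m (fullHist σ) b ro *
          (val ro.1 + Vfun T q val a (m + 1) ((fullHist σ).extend b ro.2)
            - Vfun T q val a m (fullHist σ)) := by
    intro b
    rw [Finset.mul_sum]
    refine Finset.sum_congr rfl fun ro _ => ?_
    rw [DfnN_ext_last, resTo_trExt le_rfl _ σ b ro, resTo_self]
    ring
  have hz : (∑ b : Bool, globPol 𝒪 a m (fullHist σ) b *
      ∑ ro : R × 𝒪, q m (fullHist σ) b ro *
        (F (resTo m (Nat.le_succ m) (trExt σ b ro)) *
          DfnN q val a T m (Nat.lt_succ_self m) (trExt σ b ro))) = 0 := by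
    rw [Finset.sum_congr rfl fun b _ => by rw [hin b]]
    unfold globPol
    simp only [ite_mul, one_mul, zero_mul, Finset.sum_ite_eq', Finset.mem_univ, if_true]
    rw [bellman q val a hm (fullHist σ) (hq1 (fullHist σ) a), mul_zero]
  rw [hz, mul_zero]

/-- Diagonal term: expectation of the squared TD error is the expected conditional
variance. -/
lemma diag_td {T m : ℕ} (ν : 𝒪 → ℝ)
    (hq1 : ∀ (h : Hist 𝒪 m) (b : Bool), ∑ ro : R × 𝒪, q m h b ro = 1) (hm : m < T) :
    ∑ τ : Traj 𝒪 R (m + 1), trajProb ν q (globPol 𝒪 a) τ *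
        (DfnN q val a T m (Nat.lt_succ_self m) τ * DfnN q val a T m (Nat.lt_succ_self m) τ)
      = ∑ σ : Traj 𝒪 R m, trajProb ν q (globPol 𝒪 a) σ * tdVar T q val a m (fullHist σ) := by
  rw [splitsum]
  refine Finset.sum_congr rfl fun σ _ => ?_
  congr 1
  have hin : ∀ b : Bool, (∑ ro : R × 𝒪, q m (fullHist σ) b ro *
      (DfnN q val a T m (Nat.lt_succ_self m) (trExt σ b ro) *
        DfnN q val a T m (Nat.lt_succ_self m) (trExt σ b ro)))
      = ∑ ro : R × 𝒪, q m (fullHist σ) b ro *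
          (val ro.1 + Vfun T q val a (m + 1) ((fullHist σ).extend b ro.2)
            - Vfun T q val a m (fullHist σ)) ^ 2 := by
    intro b
    refine Finset.sum_congr rfl fun ro _ => ?_
    rw [DfnN_ext_last]
    ring
  rw [Finset.sum_congr rfl fun b _ => by rw [hin b]]
  unfold globPol
  simp only [ite_mul, one_mul, zero_mul, Finset.sum_ite_eq', Finset.mem_univ, if_true]
  rw [tdVar_expand q val a hm (fullHist σ) (hq1 (fullHist σ) a)]

/-- Law of total variance along the trajectory. -/
lemma ltv {T : ℕ} (hT : 0 < T) (ν : 𝒪 → ℝ)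
    (hq1 : ∀ k, k < T → ∀ (h : Hist 𝒪 k) (b : Bool), ∑ ro : R × 𝒪, q k h b ro = 1) :
    (∑ t : Fin T, ∑ σ : Traj 𝒪 R (t : ℕ),
        trajProb ν q (globPol 𝒪 a) σ * tdVar T q val a t (fullHist σ))
      = ∑ τ : Traj 𝒪 R T, trajProb ν q (globPol 𝒪 a) τ *
          ((∑ t : Fin T, val (τ.2.2 t)) - Vfun T q val a 0 (initHist (τ.1 0))) ^ 2 := by
  have hred : ∀ (s t : Fin T) (hs : (s : ℕ) < (t : ℕ) + 1),
      (∑ τ : Traj 𝒪 R T, trajProb ν q (globPol 𝒪 a) τ *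
        (DfnN q val a T s s.isLt τ * DfnN q val a T t t.isLt τ))
      = ∑ σ : Traj 𝒪 R ((t : ℕ) + 1), trajProb ν q (globPol 𝒪 a) σ *
          (DfnN q val a T s hs σ * DfnN q val a T t (Nat.lt_succ_self _) σ) := by
    intro s t hs
    rw [← town ν q (globPol 𝒪 a) t.isLt (fun k _ hk h => glob_sum a k h)
      (fun k _ hk => hq1 k hk)
      (fun σ => DfnN q val a T s hs σ * DfnN q val a T t (Nat.lt_succ_self _) σ)]
    exact Finset.sum_congr rfl fun τ _ => rfl
  have hoff : ∀ s t : Fin T, (s : ℕ) < (t : ℕ) →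
      (∑ τ : Traj 𝒪 R T, trajProb ν q (globPol 𝒪 a) τ *
        (DfnN q val a T s s.isLt τ * DfnN q val a T t t.isLt τ)) = 0 := by
    intro s t hst
    rw [hred s t (by omega)]
    exact cross_zero q val a ν (fun σ' => DfnN q val a T s hst σ')
      (fun h b => hq1 (t : ℕ) t.isLt h b) t.isLt
  have hdiag : ∀ t : Fin T,
      (∑ σ : Traj 𝒪 R (t : ℕ), trajProb ν q (globPol 𝒪 a) σ *
          tdVar T q val a t (fullHist σ))
      = ∑ τ : Traj 𝒪 R T, trajProb ν q (globPol 𝒪 a) τ *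
          (DfnN q val a T t t.isLt τ * DfnN q val a T t t.isLt τ) := by
    intro t
    rw [hred t t (Nat.lt_succ_self _)]
    exact (diag_td q val a ν (fun h b => hq1 (t : ℕ) t.isLt h b) t.isLt).symm
  rw [Finset.sum_congr rfl fun t (_ : t ∈ Finset.univ) => hdiag t]
  have hEdiag : (∑ s : Fin T, ∑ t : Fin T, ∑ τ : Traj 𝒪 R T,
        trajProb ν q (globPol 𝒪 a) τ *
          (DfnN q val a T s s.isLt τ * DfnN q val a T t t.isLt τ))
      = ∑ t : Fin T, ∑ τ : Traj 𝒪 R T, trajProb ν q (globPol 𝒪 a) τ *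
          (DfnN q val a T t t.isLt τ * DfnN q val a T t t.isLt τ) := by
    refine Finset.sum_congr rfl fun s _ => ?_
    refine Finset.sum_eq_single_of_mem s (Finset.mem_univ s) fun t _ hts => ?_
    rcases Nat.lt_or_ge (s : ℕ) (t : ℕ) with h | h
    · exact hoff s t h
    · have hts' : (t : ℕ) < (s : ℕ) := by
        rcases Nat.lt_or_ge (t : ℕ) (s : ℕ) with h' | h'
        · exact h'
        · exact absurd (Fin.ext (by omega)) hts
      rw [Finset.sum_congr rfl fun τ (_ : τ ∈ Finset.univ) => by
        rw [mul_comm (DfnN q val a T s s.isLt τ) (DfnN q val a T t t.isLt τ)]]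
      exact hoff t s hts'
  rw [← hEdiag]
  have hswap : (∑ s : Fin T, ∑ t : Fin T, ∑ τ : Traj 𝒪 R T,
        trajProb ν q (globPol 𝒪 a) τ *
          (DfnN q val a T s s.isLt τ * DfnN q val a T t t.isLt τ))
      = ∑ τ : Traj 𝒪 R T, ∑ s : Fin T, ∑ t : Fin T,
          trajProb ν q (globPol 𝒪 a) τ *
            (DfnN q val a T s s.isLt τ * DfnN q val a T t t.isLt τ) :=
    (Finset.sum_congr rfl fun s _ => Finset.sum_comm).trans Finset.sum_comm
  rw [hswap]
  refine Finset.sum_congr rfl fun τ _ => ?_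
  rw [← sum_DfnN q val a hT τ, sq, Finset.sum_mul_sum, Finset.mul_sum]
  exact Finset.sum_congr rfl fun s _ => by rw [Finset.mul_sum]

/-- Decompose an expectation according to the initial observation. -/
lemma mix {T' : ℕ} (c : 𝒪 → ℝ) (F : Traj 𝒪 R T' → ℝ) :
    ∑ σ : Traj 𝒪 R T', trajProb μ q π σ * (c (σ.1 0) * F σ)
      = ∑ o : 𝒪, μ o * c o *
          ∑ σ : Traj 𝒪 R T',
            trajProb (fun o' => if o' = o then 1 else 0) q π σ * F σ := by
  rw [Finset.sum_congr rfl fun o (_ : o ∈ Finset.univ) => Finset.mul_sum Finset.univ _ _,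
    Finset.sum_comm]
  refine Finset.sum_congr rfl fun σ _ => ?_
  unfold trajProb
  simp only [ite_mul, one_mul, zero_mul, mul_ite, mul_zero, Finset.sum_ite_eq,
    Finset.mem_univ, if_true]
  ring

lemma sstar_shift {T : ℕ} (o : 𝒪) :
    sstarSq T q val o a = ∑ τ : Traj 𝒪 R T,
      trajProb (fun o' => if o' = o then 1 else 0) q (globPol 𝒪 a) τ *
        ((∑ t : Fin T, val (τ.2.2 t)) - Vfun T q val a 0 (initHist (τ.1 0))) ^ 2 := by
  unfold sstarSq
  refine Finset.sum_congr rfl fun τ _ => ?_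
  by_cases h0 : τ.1 0 = o
  · rw [h0]
  · have hz : trajProb (fun o' => if o' = o then 1 else 0) q (globPol 𝒪 a) τ = 0 := by
      unfold trajProb
      simp only [if_neg h0, zero_mul]
    rw [hz, zero_mul, zero_mul]

lemma fullHist_zero (σ : Traj 𝒪 R 0) : fullHist σ = initHist (σ.1 0) := by
  refine Prod.ext (funext fun i => ?_) (funext fun i => i.elim0)
  have hiv : (i : ℕ) < 0 + 1 := i.isLt
  have h0 : i = ⟨0, Nat.lt_succ_self 0⟩ := Fin.ext (show (i : ℕ) = 0 by omega)
  rw [h0]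
  rfl

lemma one_le_prod_real {ι : Type} [Fintype ι] (f : ι → ℝ) (h : ∀ i, 1 ≤ f i) :
    1 ≤ ∏ i : ι, f i := by
  calc (1 : ℝ) = ∏ _i : ι, 1 := (Finset.prod_const_one).symm
    _ ≤ ∏ i : ι, f i := Finset.prod_le_prod (fun i _ => zero_le_one) (fun i _ => h i)

lemma single_le_prod_real {ι : Type} [Fintype ι] [DecidableEq ι] (f : ι → ℝ)
    (h : ∀ i, 1 ≤ f i) (k : ι) : f k ≤ ∏ i : ι, f i := by
  rw [← Finset.mul_prod_erase Finset.univ f (Finset.mem_univ k)]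
  refine le_mul_of_one_le_right (le_trans zero_le_one (h k)) ?_
  calc (1 : ℝ) = ∏ _i ∈ Finset.univ.erase k, 1 := (Finset.prod_const_one).symm
    _ ≤ _ := Finset.prod_le_prod (fun i _ => zero_le_one) (fun i _ => h i)

lemma piStar_weight {T m : ℕ} (σ : Traj 𝒪 R m) (hall : ∀ k : Fin m, σ.2.1 k = a) :
    (piStar T q val m (fullHist σ) a)⁻¹ *
      ∏ k : Fin m, (if σ.2.1 k = a then (piStar T q val k (σ.hist k) a)⁻¹ else 0)
    = (piStar T q val 0 (initHist (σ.1 0)) a)⁻¹ := by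
  cases m with
  | zero =>
    rw [show (∏ k : Fin 0, (if σ.2.1 k = a then (piStar T q val (k : ℕ) (σ.hist k) a)⁻¹ else 0))
        = 1 from Finset.prod_of_isEmpty _, mul_one, fullHist_zero σ]
  | succ n =>
    have h1 : piStar T q val (n + 1) (fullHist σ) a = 1 := by
      unfold piStar
      rw [dif_neg (Nat.succ_ne_zero n)]
      show (if a = σ.2.1 (⟨0, Nat.succ_pos n⟩ : Fin (n + 1)) then (1 : ℝ) else 0) = 1
      rw [hall ⟨0, Nat.succ_pos n⟩]
      simp
    have hfac : ∀ k : Fin (n + 1),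
        (if σ.2.1 k = a then (piStar T q val (k : ℕ) (σ.hist k) a)⁻¹ else 0)
        = (if (k : ℕ) = 0 then (piStar T q val 0 (initHist (σ.1 0)) a)⁻¹ else 1) := by
      intro k
      rw [if_pos (hall k)]
      by_cases hk0 : (k : ℕ) = 0
      · rw [if_pos hk0]
        have hk : k = ⟨0, Nat.succ_pos n⟩ := Fin.ext hk0
        rw [hk, hist_zero (Nat.succ_pos n) σ]
      · rw [if_neg hk0]
        have h2 : piStar T q val (k : ℕ) (σ.hist k) a = 1 := by
          unfold piStar
          rw [dif_neg hk0]
          show (if a = σ.2.1 (⟨0, Nat.succ_pos n⟩ : Fin (n + 1)) then (1 : ℝ) else 0) = 1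
          rw [hall ⟨0, Nat.succ_pos n⟩]
          simp
        rw [h2, inv_one]
    rw [h1, inv_one, one_mul, Finset.prod_congr rfl fun k _ => hfac k,
      Finset.prod_eq_single_of_mem (⟨0, Nat.succ_pos n⟩ : Fin (n + 1)) (Finset.mem_univ _)
        (fun k _ hk => if_neg fun h => hk (Fin.ext h)), if_pos rfl]

lemma weight_ge {T m : ℕ} (πb : (t : ℕ) → Hist 𝒪 t → Bool → ℝ)
    (hpos : ∀ k, k < T → ∀ (h : Hist 𝒪 k) (b : Bool), 0 < πb k h b)
    (hsum : ∀ k, k < T → ∀ h : Hist 𝒪 k, πb k h false + πb k h true = 1)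
    (hm : m < T) (σ : Traj 𝒪 R m) (hall : ∀ k : Fin m, σ.2.1 k = a) :
    (πb 0 (initHist (σ.1 0)) a)⁻¹
      ≤ (πb m (fullHist σ) a)⁻¹ *
          ∏ k : Fin m, (if σ.2.1 k = a then (πb k (σ.hist k) a)⁻¹ else 0) := by
  have hinv1 : ∀ k, k < T → ∀ h : Hist 𝒪 k, 1 ≤ (πb k h a)⁻¹ := by
    intro k hk h
    have h1 := hpos k hk h false
    have h2 := hpos k hk h true
    have h3 := hsum k hk h
    refine (one_le_inv₀ (by cases a; exacts [h1, h2])).mpr ?_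
    cases a
    · linarith
    · linarith
  cases m with
  | zero =>
    rw [show (∏ k : Fin 0, (if σ.2.1 k = a then (πb (k : ℕ) (σ.hist k) a)⁻¹ else 0)) = 1
      from Finset.prod_of_isEmpty _, mul_one, fullHist_zero σ]
  | succ n =>
    rw [Finset.prod_congr rfl fun (k : Fin (n + 1)) (_ : k ∈ Finset.univ) => if_pos (hall k)]
    have hstep1 : (πb 0 (initHist (σ.1 0)) a)⁻¹
        ≤ ∏ k : Fin (n + 1), (πb (k : ℕ) (σ.hist k) a)⁻¹ := by
      have h0 : (πb 0 (initHist (σ.1 0)) a)⁻¹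
          = (πb ((⟨0, Nat.succ_pos n⟩ : Fin (n + 1)) : ℕ)
              (σ.hist ⟨0, Nat.succ_pos n⟩) a)⁻¹ := by
        rw [hist_zero (Nat.succ_pos n) σ]
      rw [h0]
      exact single_le_prod_real (fun k : Fin (n + 1) => (πb (k : ℕ) (σ.hist k) a)⁻¹)
        (fun k => hinv1 (k : ℕ) (by have := k.isLt; omega) _) ⟨0, Nat.succ_pos n⟩
    refine le_trans hstep1 ?_
    refine le_mul_of_one_le_left ?_ (hinv1 (n + 1) hm _)
    exact le_trans zero_le_one (one_le_prod_real
      (fun k : Fin (n + 1) => (πb (k : ℕ) (σ.hist k) a)⁻¹)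
      fun k => hinv1 (k : ℕ) (by have := k.isLt; omega) _)

lemma key_sum {T : ℕ} (hT : 0 < T) (c : 𝒪 → ℝ)
    (hq1 : ∀ k, k < T → ∀ (h : Hist 𝒪 k) (b : Bool), ∑ ro : R × 𝒪, q k h b ro = 1) :
    (∑ t : Fin T, ∑ σ : Traj 𝒪 R (t : ℕ),
        trajProb μ q (globPol 𝒪 a) σ * (c (σ.1 0) * tdVar T q val a t (fullHist σ)))
      = ∑ o : 𝒪, μ o * c o * sstarSq T q val o a := by
  rw [Finset.sum_congr rfl fun (t : Fin T) (_ : t ∈ Finset.univ) =>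
    mix μ q (globPol 𝒪 a) c (fun σ => tdVar T q val a t (fullHist σ)), Finset.sum_comm]
  refine Finset.sum_congr rfl fun o _ => ?_
  rw [← Finset.mul_sum, ltv q val a hT (fun o' => if o' = o then 1 else 0) hq1,
    ← sstar_shift q val a o]

lemma piStar_sum {T : ℕ}
    (hs : ∀ (o : 𝒪) (b : Bool), 0 < Real.sqrt (sstarSq T q val o b)) :
    ∀ k, k < T → ∀ h : Hist 𝒪 k,
      piStar T q val k h false + piStar T q val k h true = 1 := by
  intro k hk h
  by_cases hk0 : k = 0
  · subst hk0
    unfold piStar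
    rw [dif_pos rfl, dif_pos rfl, ← add_div, div_self
      (ne_of_gt (add_pos (hs (h.1 0) false) (hs (h.1 0) true)))]
  · unfold piStar
    rw [dif_neg hk0, dif_neg hk0]
    cases hb : h.2 ⟨0, Nat.pos_of_ne_zero hk0⟩ <;> simp [hb]


lemma cs_bound (sf st p pt : ℝ) (hp0 : 0 < p) (hp1 : 0 < pt) (hsum : p + pt = 1) :
    (sf + st) ^ 2 ≤ pt⁻¹ * st ^ 2 + p⁻¹ * sf ^ 2 := by
  have hne0 : p ≠ 0 := ne_of_gt hp0
  have hne1 : pt ≠ 0 := ne_of_gt hp1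
  have hkey : (sf + st) ^ 2 * (p * pt) ≤ st ^ 2 * p + sf ^ 2 * pt := by
    have hpt : pt = 1 - p := by linarith
    subst hpt
    nlinarith [sq_nonneg (sf * (1 - p) - st * p)]
  have hrw : pt⁻¹ * st ^ 2 + p⁻¹ * sf ^ 2 = (st ^ 2 * p + sf ^ 2 * pt) / (p * pt) := by
    rw [inv_mul_eq_div, inv_mul_eq_div, div_add_div _ _ hne1 hne0, mul_comm pt p,
      mul_comm pt (sf ^ 2)]
  rw [hrw, le_div_iff₀ (mul_pos hp0 hp1)]
  exact hkey
end Proof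
/-- **Theorem 1 of the paper (tabular non-Markov decision process).**
For every everywhere-positive behavior policy `π^b`,
`EB₁(π^b) ≥ T⁻² E_{O₁∼μ}[(σ_*(O₁,0) + σ_*(O₁,1))²] + T⁻² Var_{O₁∼μ}(V₁¹(O₁) − V₁⁰(O₁))`,
and equality holds for the design `π^{b*}` that randomizes the initial action with
probabilities `σ_*(o₁,a)/(σ_*(o₁,0)+σ_*(o₁,1))` and then repeats the initial action at
all later times.  Rewards take values in the finite alphabet `ℛ ⊂ ℝ` (encoded as the
subtype `↥ℛ` with embedding `Subtype.val`). -/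
theorem nmdp_optimal_design {𝒪 : Type} [Fintype 𝒪] [DecidableEq 𝒪] [Nonempty 𝒪]
    (T : ℕ) (hT : 1 ≤ T) (ℛ : Finset ℝ)
    (μ : 𝒪 → ℝ) (hμ : ∀ o, 0 ≤ μ o) (hμ1 : ∑ o : 𝒪, μ o = 1)
    (q : (t : ℕ) → Hist 𝒪 t → Bool → ↥ℛ × 𝒪 → ℝ)
    (hqnn : ∀ t, t < T → ∀ (h : Hist 𝒪 t) (a : Bool) (ro : ↥ℛ × 𝒪), 0 ≤ q t h a ro)
    (hqsum : ∀ t, t < T → ∀ (h : Hist 𝒪 t) (a : Bool), ∑ ro : ↥ℛ × 𝒪, q t h a ro = 1)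
    (hs : ∀ (o : 𝒪) (a : Bool),
      0 < Real.sqrt (sstarSq T q (Subtype.val : ↥ℛ → ℝ) o a)) :
    (∀ πb : (t : ℕ) → Hist 𝒪 t → Bool → ℝ,
      (∀ t, t < T → ∀ (h : Hist 𝒪 t) (a : Bool), 0 < πb t h a) →
      (∀ t, t < T → ∀ h : Hist 𝒪 t, πb t h false + πb t h true = 1) →
      ((T : ℝ) ^ 2)⁻¹ * (∑ o : 𝒪, μ o *
            (Real.sqrt (sstarSq T q (Subtype.val : ↥ℛ → ℝ) o false)
              + Real.sqrt (sstarSq T q (Subtype.val : ↥ℛ → ℝ) o true)) ^ 2)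
          + ((T : ℝ) ^ 2)⁻¹ * varInit T μ q (Subtype.val : ↥ℛ → ℝ)
        ≤ EB1 T μ q (Subtype.val : ↥ℛ → ℝ) πb) ∧
    EB1 T μ q (Subtype.val : ↥ℛ → ℝ) (piStar T q (Subtype.val : ↥ℛ → ℝ))
      = ((T : ℝ) ^ 2)⁻¹ * (∑ o : 𝒪, μ o *
            (Real.sqrt (sstarSq T q (Subtype.val : ↥ℛ → ℝ) o false)
              + Real.sqrt (sstarSq T q (Subtype.val : ↥ℛ → ℝ) o true)) ^ 2)
          + ((T : ℝ) ^ 2)⁻¹ * varInit T μ q (Subtype.val : ↥ℛ → ℝ) := by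
  have hT0 : 0 < T := hT
  set vl : ↥ℛ → ℝ := (Subtype.val : ↥ℛ → ℝ) with hvl
  -- nonnegativity of σ_*²
  have hsnn : ∀ (o : 𝒪) (b : Bool), 0 ≤ sstarSq T q vl o b := by
    intro o b
    refine Finset.sum_nonneg fun τ _ => mul_nonneg ?_ (sq_nonneg _)
    refine trajProb_nonneg _ q (globPol 𝒪 b) (fun o' => by split <;> norm_num)
      (fun k h c => glob_nonneg b (k : ℕ) h c)
      (fun k h c ro => hqnn (k : ℕ) k.isLt h c ro) τ
  have hsq : ∀ (o : 𝒪) (b : Bool),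
      Real.sqrt (sstarSq T q vl o b) ^ 2 = sstarSq T q vl o b :=
    fun o b => Real.sq_sqrt (hsnn o b)
  -- nonnegativity of trajProb under the global policy (any horizon ≤ T)
  have hPnn : ∀ (m : ℕ), m ≤ T → ∀ (b : Bool) (σ : Traj 𝒪 (↥ℛ) m),
      0 ≤ trajProb μ q (globPol 𝒪 b) σ := by
    intro m hm b σ
    refine trajProb_nonneg μ q (globPol 𝒪 b) hμ
      (fun k h c => glob_nonneg b (k : ℕ) h c)
      (fun k h c ro => hqnn (k : ℕ) (by have := k.isLt; omega) h c ro) σ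
  have htdnn : ∀ (b : Bool) (t : Fin T) (h : Hist 𝒪 (t : ℕ)), 0 ≤ tdVar T q vl b t h :=
    fun b t h => tdVar_nonneg q vl b h (fun ro => hqnn (t : ℕ) t.isLt h b ro)
  constructor
  · -- lower bound for an arbitrary positive behaviour policy
    intro πb hpos hsum
    have main1 : (∑ o : 𝒪, μ o * (Real.sqrt (sstarSq T q vl o false)
          + Real.sqrt (sstarSq T q vl o true)) ^ 2)
        ≤ ∑ b : Bool, ∑ t : Fin T, isTerm T μ q vl πb b t := by
      calc (∑ o : 𝒪, μ o * (Real.sqrt (sstarSq T q vl o false)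
              + Real.sqrt (sstarSq T q vl o true)) ^ 2)
          ≤ ∑ o : 𝒪, ∑ b : Bool, μ o * ((πb 0 (initHist o) b)⁻¹ * sstarSq T q vl o b) := by
            refine Finset.sum_le_sum fun o _ => ?_
            rw [Fintype.sum_bool, ← mul_add]
            refine mul_le_mul_of_nonneg_left ?_ (hμ o)
            set sf := Real.sqrt (sstarSq T q vl o false) with hsf
            set st := Real.sqrt (sstarSq T q vl o true) with hst
            have hvf : sstarSq T q vl o false = sf ^ 2 := (hsq o false).symm
            have hvt : sstarSq T q vl o true = st ^ 2 := (hsq o true).symm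
            rw [hvf, hvt]
            exact cs_bound sf st _ _ (hpos 0 hT0 _ _) (hpos 0 hT0 _ _) (hsum 0 hT0 _)
        _ = ∑ b : Bool, ∑ o : 𝒪, μ o * ((πb 0 (initHist o) b)⁻¹ * sstarSq T q vl o b) :=
            Finset.sum_comm
        _ = ∑ b : Bool, ∑ t : Fin T, ∑ σ : Traj 𝒪 (↥ℛ) (t : ℕ),
              trajProb μ q (globPol 𝒪 b) σ *
                ((πb 0 (initHist (σ.1 0)) b)⁻¹ * tdVar T q vl b t (fullHist σ)) := by
            refine Finset.sum_congr rfl fun b _ => ?_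
            rw [key_sum μ q vl b hT0 (fun o => (πb 0 (initHist o) b)⁻¹) hqsum]
            exact Finset.sum_congr rfl fun o _ => by ring
        _ ≤ ∑ b : Bool, ∑ t : Fin T, isTerm T μ q vl πb b t := by
            refine Finset.sum_le_sum fun b _ => Finset.sum_le_sum fun t _ => ?_
            rw [isTerm_eq μ q vl b πb hsum hqsum t]
            refine Finset.sum_le_sum fun σ _ => ?_
            by_cases hall : ∀ k : Fin (t : ℕ), σ.2.1 k = b
            · have hP := hPnn (t : ℕ) t.isLt.le b σ
              have htd := htdnn b t (fullHist σ)
              have hwge := weight_ge b πb hpos hsum t.isLt σ hall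
              calc trajProb μ q (globPol 𝒪 b) σ *
                    ((πb 0 (initHist (σ.1 0)) b)⁻¹ * tdVar T q vl b t (fullHist σ))
                  = (trajProb μ q (globPol 𝒪 b) σ * tdVar T q vl b t (fullHist σ)) *
                      (πb 0 (initHist (σ.1 0)) b)⁻¹ := by ring
                _ ≤ (trajProb μ q (globPol 𝒪 b) σ * tdVar T q vl b t (fullHist σ)) *
                      ((πb (t : ℕ) (fullHist σ) b)⁻¹ *
                        ∏ k : Fin (t : ℕ),
                          (if σ.2.1 k = b then (πb (k : ℕ) (σ.hist k) b)⁻¹ else 0)) :=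
                    mul_le_mul_of_nonneg_left hwge (mul_nonneg hP htd)
                _ = trajProb μ q (globPol 𝒪 b) σ * (tdVar T q vl b t (fullHist σ) *
                      ((πb (t : ℕ) (fullHist σ) b)⁻¹ *
                        ∏ k : Fin (t : ℕ),
                          (if σ.2.1 k = b then (πb (k : ℕ) (σ.hist k) b)⁻¹ else 0))) := by
                    ring
            · obtain ⟨k, hk⟩ := not_forall.mp hall
              rw [trajProb_glob_zero μ q b σ k hk, zero_mul, zero_mul]
    unfold EB1
    exact add_le_add_left
      (mul_le_mul_of_nonneg_left main1 (inv_nonneg.mpr (sq_nonneg _))) _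
  · -- equality for the optimal design
    have hπsum := piStar_sum q vl hs
    have main2 : (∑ b : Bool, ∑ t : Fin T, isTerm T μ q vl (piStar T q vl) b t)
        = ∑ o : 𝒪, μ o * (Real.sqrt (sstarSq T q vl o false)
            + Real.sqrt (sstarSq T q vl o true)) ^ 2 := by
      calc (∑ b : Bool, ∑ t : Fin T, isTerm T μ q vl (piStar T q vl) b t)
          = ∑ b : Bool, ∑ t : Fin T, ∑ σ : Traj 𝒪 (↥ℛ) (t : ℕ),
              trajProb μ q (globPol 𝒪 b) σ *
                ((piStar T q vl 0 (initHist (σ.1 0)) b)⁻¹ * tdVar T q vl b t (fullHist σ)) := by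
            refine Finset.sum_congr rfl fun b _ => Finset.sum_congr rfl fun t _ => ?_
            rw [isTerm_eq μ q vl b (piStar T q vl) hπsum hqsum t]
            refine Finset.sum_congr rfl fun σ _ => ?_
            by_cases hall : ∀ k : Fin (t : ℕ), σ.2.1 k = b
            · rw [show tdVar T q vl b t (fullHist σ) *
                  ((piStar T q vl (t : ℕ) (fullHist σ) b)⁻¹ *
                    ∏ k : Fin (t : ℕ),
                      (if σ.2.1 k = b then (piStar T q vl (k : ℕ) (σ.hist k) b)⁻¹ else 0))
                = ((piStar T q vl (t : ℕ) (fullHist σ) b)⁻¹ *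
                    ∏ k : Fin (t : ℕ),
                      (if σ.2.1 k = b then (piStar T q vl (k : ℕ) (σ.hist k) b)⁻¹ else 0)) *
                    tdVar T q vl b t (fullHist σ) from by ring,
                piStar_weight q vl b σ hall]
            · obtain ⟨k, hk⟩ := not_forall.mp hall
              rw [trajProb_glob_zero μ q b σ k hk, zero_mul, zero_mul]
        _ = ∑ b : Bool, ∑ o : 𝒪, μ o *
              ((piStar T q vl 0 (initHist o) b)⁻¹ * sstarSq T q vl o b) := by
            refine Finset.sum_congr rfl fun b _ => ?_
            rw [key_sum μ q vl b hT0 (fun o => (piStar T q vl 0 (initHist o) b)⁻¹) hqsum]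
            exact Finset.sum_congr rfl fun o _ => by ring
        _ = ∑ o : 𝒪, ∑ b : Bool, μ o *
              ((piStar T q vl 0 (initHist o) b)⁻¹ * sstarSq T q vl o b) :=
            Finset.sum_comm
        _ = ∑ o : 𝒪, μ o * (Real.sqrt (sstarSq T q vl o false)
              + Real.sqrt (sstarSq T q vl o true)) ^ 2 := by
            refine Finset.sum_congr rfl fun o _ => ?_
            rw [Fintype.sum_bool]
            have hpis : ∀ b : Bool, piStar T q vl 0 (initHist o) b
                = Real.sqrt (sstarSq T q vl o b) /
                    (Real.sqrt (sstarSq T q vl o false) + Real.sqrt (sstarSq T q vl o true)) := by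
              intro b
              unfold piStar
              rw [dif_pos rfl]
              rfl
            rw [hpis true, hpis false, inv_div, inv_div]
            set sf := Real.sqrt (sstarSq T q vl o false) with hsf
            set st := Real.sqrt (sstarSq T q vl o true) with hst
            have hvf : sstarSq T q vl o false = sf ^ 2 := (hsq o false).symm
            have hvt : sstarSq T q vl o true = st ^ 2 := (hsq o true).symm
            rw [hvf, hvt]
            have hsf0 : sf ≠ 0 := ne_of_gt (hs o false)
            have hst0 : st ≠ 0 := ne_of_gt (hs o true)
            field_simp
            ring
    unfold EB1
    rw [main2]
end

section
/- Fix a finite nonempty observation set 𝒪, an integer horizon T ≥ 1, actions in {0,1}, and a finite reward alphabet ℛ ⊂ ℝ, with initial distribution μ on 𝒪 and, for each t, history h_t = (o_1, a_1, …, o_t) and action a_t, a probability mass function q_t(·, · | h_t, a_t) on ℛ × 𝒪 specifying jointly the reward R_t and the next observation O_{t+1}. For a ∈ {0,1}, let E^a denote expectation under the process with O_1 ~ μ and A_t = a for all t, define V_t^a(h_t) = E^a[Σ_{k=t}^T R_k | H_t = h_t] with V_{T+1}^a ≡ 0, σ_t²(h_t, a) = Var(R_t + V_{t+1}^a(H_{t+1})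 − V_t^a(h_t) | H_t = h_t, A_t = a), and σ_*²(o, a) = E^a[(Σ_{t=1}^T R_t − V_1^a(o))² | O_1 = o]. Let π^b be the behavior policy that draws A_1 given O_1 = o with probability p(o) ∈ (0,1) of A_1 = 1 and sets A_t = A_1 for all t ≥ 2 (so π_t^b(A_1 | H_t) = 1 for t ≥ 2). Then, with the convention that a summand is 0 on the event that A_k ≠ a for some k ≤ t, Σ_{a∈{0,1}} Σ_{t=1}^T E^{π^b}[σ_t²(H_t, a) Π_{k≤t} 1(A_k = a)/π_k^b(a | H_k)²] = E_{O_1∼μ}[σ_*²(O_1, 1)/p(O_1) + σ_*²(O_1, 0)/(1 − p(O_1))]. -/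
open Finset

/-- A behavior policy in the restricted class `Π^b`: draw `A₁ = 1` with probability
`p(O₁)` given the initial observation `O₁`, and deterministically repeat the initial
action at all later times. -/
noncomputable def classPol (𝒪 : Type) (p : 𝒪 → ℝ) : (t : ℕ) → Hist 𝒪 t → Bool → ℝ :=
  fun t h b =>
    if ht : t = 0 then (if b then p (h.1 0) else 1 - p (h.1 0))
    else if b = h.2 ⟨0, Nat.pos_of_ne_zero ht⟩ then 1 else 0


section Dev
set_option linter.unusedSectionVars false
variable {𝒪 R : Type} [Fintype 𝒪] [DecidableEq 𝒪] [Fintype R]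

/-- prepend an observation and an action to a history -/
def prep (o : 𝒪) (a : Bool) {t : ℕ} (h : Hist 𝒪 t) : Hist 𝒪 (t + 1) :=
  (Fin.cons o h.1, Fin.cons a h.2)

lemma prep_extend (o : 𝒪) (a b : Bool) {t : ℕ} (h : Hist 𝒪 t) (o' : 𝒪) :
    prep o a (h.extend b o') = (prep o a h).extend b o' := by
  unfold prep Hist.extend
  simp only [Fin.cons_snoc_eq_snoc_cons]

/-- shifted transition kernel -/
def qshift (q : (t : ℕ) → Hist 𝒪 t → Bool → R × 𝒪 → ℝ) (o : 𝒪) (a : Bool) :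
    (t : ℕ) → Hist 𝒪 t → Bool → R × 𝒪 → ℝ :=
  fun t h => q (t + 1) (prep o a h)

lemma Vaux_shift (q : (t : ℕ) → Hist 𝒪 t → Bool → R × 𝒪 → ℝ) (val : R → ℝ)
    (o : 𝒪) (a : Bool) :
    ∀ (k t : ℕ) (h : Hist 𝒪 t),
      Vaux q val a k (t + 1) (prep o a h) = Vaux (qshift q o a) val a k t h
  | 0, _, _ => rfl
  | (k+1), t, h => by
    simp only [Vaux]
    refine Finset.sum_congr rfl fun ro _ => ?_
    rw [← prep_extend, Vaux_shift q val o a k (t+1) (h.extend a ro.2)]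
    rfl

lemma Vfun_shift (T : ℕ) (q : (t : ℕ) → Hist 𝒪 t → Bool → R × 𝒪 → ℝ) (val : R → ℝ)
    (o : 𝒪) (a : Bool) (t : ℕ) (h : Hist 𝒪 t) :
    Vfun (T+1) q val a (t+1) (prep o a h) = Vfun T (qshift q o a) val a t h := by
  unfold Vfun
  rw [Nat.succ_sub_succ]
  exact Vaux_shift q val o a (T - t) t h

lemma tdVar_shift (T : ℕ) (q : (t : ℕ) → Hist 𝒪 t → Bool → R × 𝒪 → ℝ) (val : R → ℝ)
    (o : 𝒪) (a : Bool) (t : ℕ) (h : Hist 𝒪 t) :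
    tdVar (T+1) q val a (t+1) (prep o a h) = tdVar T (qshift q o a) val a t h := by
  have hx : ∀ ro : R × 𝒪,
      val ro.1 + Vfun (T+1) q val a (t+1+1) ((prep o a h).extend a ro.2)
        - Vfun (T+1) q val a (t+1) (prep o a h)
      = val ro.1 + Vfun T (qshift q o a) val a (t+1) (h.extend a ro.2)
        - Vfun T (qshift q o a) val a t h := by
    intro ro
    rw [← prep_extend, Vfun_shift, Vfun_shift]
  simp only [tdVar]
  simp only [hx]
  rfl

lemma Vfun_succ (T : ℕ) (q : (t : ℕ) → Hist 𝒪 t → Bool → R × 𝒪 → ℝ) (val : R → ℝ)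
    (a : Bool) (t : ℕ) (ht : t < T) (h : Hist 𝒪 t) :
    Vfun T q val a t h
      = ∑ ro : R × 𝒪, q t h a ro * (val ro.1 + Vfun T q val a (t+1) (h.extend a ro.2)) := by
  obtain ⟨m, hm⟩ : ∃ m, T - t = m + 1 := ⟨T - t - 1, by omega⟩
  have h2 : T - (t+1) = m := by omega
  unfold Vfun
  rw [hm, h2]
  rfl

lemma tdVar_eq (T : ℕ) (q : (t : ℕ) → Hist 𝒪 t → Bool → R × 𝒪 → ℝ) (val : R → ℝ)
    (a : Bool) (t : ℕ) (ht : t < T) (h : Hist 𝒪 t)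
    (hq1 : ∑ ro : R × 𝒪, q t h a ro = 1) :
    tdVar T q val a t h = ∑ ro : R × 𝒪,
      q t h a ro * (val ro.1 + Vfun T q val a (t+1) (h.extend a ro.2)
        - Vfun T q val a t h)^2 := by
  have hmean : (∑ ro : R × 𝒪, q t h a ro *
      (val ro.1 + Vfun T q val a (t+1) (h.extend a ro.2) - Vfun T q val a t h)) = 0 := by
    simp only [mul_sub]
    rw [Finset.sum_sub_distrib, ← Finset.sum_mul, hq1, ← Vfun_succ T q val a t ht h]
    ring
  simp only [tdVar]
  rw [hmean]
  simp only [sub_zero]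

end Dev
section Dev2
set_option linter.unusedSectionVars false
variable {𝒪 R : Type} [Fintype 𝒪] [DecidableEq 𝒪] [Fintype R]

/-- history cut from an observation path with constant action -/
def hcut {T : ℕ} (ω : Fin (T+1) → 𝒪) (a : Bool) (t : Fin T) : Hist 𝒪 t :=
  (fun i => ω (Fin.castLE (Nat.succ_le_succ t.isLt.le) i), fun _ => a)

lemma hist_const {T : ℕ} (ω : Fin (T+1) → 𝒪) (r : Fin T → R) (a : Bool) (t : Fin T) :
    Traj.hist (𝒪 := 𝒪) (R := R) (ω, fun _ => a, r) t = hcut ω a t := rfl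

lemma cons_val0 {X : Type} {n : ℕ} (x : X) (f : Fin n → X) (i : Fin (n+1))
    (h : i.val = 0) : Fin.cons (α := fun _ => X) x f i = x := by
  have : i = 0 := Fin.ext (by simp [h])
  rw [this, Fin.cons_zero]

lemma cons_val_succ {X : Type} {n : ℕ} (x : X) (f : Fin n → X) (i : Fin (n+1))
    (j : Fin n) (h : i.val = j.val + 1) : Fin.cons (α := fun _ => X) x f i = f j := by
  have : i = j.succ := Fin.ext (by simp [h])
  rw [this, Fin.cons_succ]

/-- forced-trajectory weight -/
noncomputable def fw {T : ℕ} (q : (t : ℕ) → Hist 𝒪 t → Bool → R × 𝒪 → ℝ) (a : Bool)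
    (ω : Fin (T+1) → 𝒪) (r : Fin T → R) : ℝ :=
  ∏ t : Fin T, q t (hcut ω a t) a (r t, ω t.succ)

lemma hcut_zero {T : ℕ} (ω : Fin (T+2) → 𝒪) (a : Bool) :
    hcut ω a (0 : Fin (T+1)) = initHist (ω 0) := by
  unfold hcut initHist
  refine Prod.ext ?_ ?_
  · funext i
    show ω _ = ω 0
    congr 1
    have hi : i.val = 0 := by
      have h1 := i.isLt
      have h0 : ((0 : Fin (T+1)) : ℕ) = 0 := rfl
      omega
    exact Fin.ext hi
  · funext i
    exact i.elim0

lemma hcut_succ {T : ℕ} (o : 𝒪) (ω : Fin (T+1) → 𝒪) (a : Bool) (t : Fin T) :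
    hcut (Fin.cons o ω) a t.succ = prep o a (hcut ω a t) := by
  unfold hcut prep
  refine Prod.ext ?_ ?_
  · show (fun i => Fin.cons (α := fun _ => 𝒪) o ω
        (Fin.castLE (Nat.succ_le_succ t.succ.isLt.le) i))
        = Fin.cons (α := fun _ => 𝒪) o
            (fun i => ω (Fin.castLE (Nat.succ_le_succ t.isLt.le) i))
    funext i
    refine Fin.cases ?_ (fun j => ?_) i
    · rw [Fin.cons_zero, cons_val0]
      simp
    · rw [Fin.cons_succ, cons_val_succ (j := Fin.castLE (Nat.succ_le_succ t.isLt.le) j)]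
      simp
  · show (fun _ => a) = Fin.cons (α := fun _ => Bool) a (fun _ => a)
    funext i
    refine Fin.cases ?_ (fun j => ?_) i
    · rw [Fin.cons_zero]
    · rw [Fin.cons_succ]

lemma fw_cons {T : ℕ} (q : (t : ℕ) → Hist 𝒪 t → Bool → R × 𝒪 → ℝ) (a : Bool)
    (o : 𝒪) (ω : Fin (T+1) → 𝒪) (r₀ : R) (r : Fin T → R) :
    fw (T := T+1) q a (Fin.cons o ω) (Fin.cons r₀ r)
      = q 0 (initHist o) a (r₀, ω 0) * fw (qshift q o a) a ω r := by
  unfold fw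
  rw [Fin.prod_univ_succ]
  congr 1
  · rw [hcut_zero]
    simp
  · refine Finset.prod_congr rfl fun i _ => ?_
    rw [hcut_succ]
    simp only [Fin.cons_succ]
    rfl

lemma sum_pi_cons {X : Type} [Fintype X] {n : ℕ} (g : (Fin (n+1) → X) → ℝ) :
    ∑ f : Fin (n+1) → X, g f = ∑ x : X, ∑ f : Fin n → X, g (Fin.cons x f) := by
  rw [← (Fin.consEquiv (fun _ => X)).sum_comp g, Fintype.sum_prod_type]
  rfl

/-- expectation of `G` over forced trajectories started at `o` -/
noncomputable def EO {T : ℕ} (q : (t : ℕ) → Hist 𝒪 t → Bool → R × 𝒪 → ℝ) (a : Bool)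
    (o : 𝒪) (G : (Fin (T+1) → 𝒪) → (Fin T → R) → ℝ) : ℝ :=
  ∑ ω : Fin (T+1) → 𝒪, ∑ r : Fin T → R, (if ω 0 = o then fw q a ω r * G ω r else 0)

lemma EO_congr {T : ℕ} {q : (t : ℕ) → Hist 𝒪 t → Bool → R × 𝒪 → ℝ} {a : Bool}
    {o : 𝒪} {G₁ G₂ : (Fin (T+1) → 𝒪) → (Fin T → R) → ℝ}
    (hG : ∀ ω r, ω 0 = o → G₁ ω r = G₂ ω r) : EO q a o G₁ = EO q a o G₂ := by
  unfold EO
  refine Finset.sum_congr rfl fun ω _ => Finset.sum_congr rfl fun r _ => ?_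
  by_cases h : ω 0 = o
  · simp only [h, if_pos rfl, hG ω r h]
  · simp [h]

lemma EO_add {T : ℕ} (q : (t : ℕ) → Hist 𝒪 t → Bool → R × 𝒪 → ℝ) (a : Bool)
    (o : 𝒪) (G₁ G₂ : (Fin (T+1) → 𝒪) → (Fin T → R) → ℝ) :
    EO q a o (fun ω r => G₁ ω r + G₂ ω r) = EO q a o G₁ + EO q a o G₂ := by
  unfold EO
  rw [← Finset.sum_add_distrib]
  refine Finset.sum_congr rfl fun ω _ => ?_
  rw [← Finset.sum_add_distrib]
  refine Finset.sum_congr rfl fun r _ => ?_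
  split <;> ring

lemma EO_smul {T : ℕ} (q : (t : ℕ) → Hist 𝒪 t → Bool → R × 𝒪 → ℝ) (a : Bool)
    (o : 𝒪) (c : ℝ) (G : (Fin (T+1) → 𝒪) → (Fin T → R) → ℝ) :
    EO q a o (fun ω r => c * G ω r) = c * EO q a o G := by
  unfold EO
  rw [Finset.mul_sum]
  refine Finset.sum_congr rfl fun ω _ => ?_
  rw [Finset.mul_sum]
  refine Finset.sum_congr rfl fun r _ => ?_
  split <;> ring

lemma EO_peel {T : ℕ} (q : (t : ℕ) → Hist 𝒪 t → Bool → R × 𝒪 → ℝ) (a : Bool) (o : 𝒪)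
    (G : (Fin (T+2) → 𝒪) → (Fin (T+1) → R) → ℝ) :
    EO (T := T+1) q a o G
      = ∑ ro : R × 𝒪, q 0 (initHist o) a ro *
          EO (T := T) (qshift q o a) a ro.2
            (fun ω r => G (Fin.cons o ω) (Fin.cons ro.1 r)) := by
  have hL : EO (T := T+1) q a o G
      = ∑ ω : Fin (T+1) → 𝒪, ∑ r₀ : R, ∑ r : Fin T → R,
          (q 0 (initHist o) a (r₀, ω 0) * fw (qshift q o a) a ω r
            * G (Fin.cons o ω) (Fin.cons r₀ r)) := by
    unfold EO
    rw [sum_pi_cons (fun ω => ∑ r : Fin (T+1) → R,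
      (if ω 0 = o then fw q a ω r * G ω r else 0))]
    rw [Finset.sum_eq_single o
      (fun x _ hx => Finset.sum_eq_zero fun ω _ => Finset.sum_eq_zero fun r _ => by
        simp [Fin.cons_zero, hx])
      (fun h => absurd (Finset.mem_univ o) h)]
    refine Finset.sum_congr rfl fun ω _ => ?_
    simp only [Fin.cons_zero, eq_self_iff_true, if_true]
    rw [sum_pi_cons (fun r => fw q a (Fin.cons o ω) r * G (Fin.cons o ω) r)]
    refine Finset.sum_congr rfl fun r₀ _ => Finset.sum_congr rfl fun r _ => ?_
    rw [fw_cons]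
  have hR : ∀ ro : R × 𝒪, q 0 (initHist o) a ro *
        EO (T := T) (qshift q o a) a ro.2
          (fun ω r => G (Fin.cons o ω) (Fin.cons ro.1 r))
      = ∑ ω : Fin (T+1) → 𝒪, ∑ r : Fin T → R,
          (if ω 0 = ro.2 then q 0 (initHist o) a ro * fw (qshift q o a) a ω r
            * G (Fin.cons o ω) (Fin.cons ro.1 r) else 0) := by
    intro ro
    unfold EO
    rw [Finset.mul_sum]
    refine Finset.sum_congr rfl fun ω _ => ?_
    rw [Finset.mul_sum]
    refine Finset.sum_congr rfl fun r _ => ?_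
    split <;> ring
  rw [hL, Finset.sum_congr rfl fun ro _ => hR ro,
      Fintype.sum_prod_type (f := fun ro : R × 𝒪 => ∑ ω : Fin (T+1) → 𝒪, ∑ r : Fin T → R,
        (if ω 0 = ro.2 then q 0 (initHist o) a ro * fw (qshift q o a) a ω r
            * G (Fin.cons o ω) (Fin.cons ro.1 r) else 0))]
  refine Eq.trans (Finset.sum_comm) (Finset.sum_congr rfl fun r₀ _ => ?_)
  refine Eq.trans ?_ (Finset.sum_comm)
  refine Finset.sum_congr rfl fun ω _ => ?_
  refine Eq.trans ?_ (Finset.sum_comm)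
  refine Finset.sum_congr rfl fun r _ => ?_
  rw [Finset.sum_ite_eq Finset.univ (ω 0)]
  simp

end Dev2
section Dev3
set_option linter.unusedSectionVars false
set_option maxHeartbeats 1000000
variable {𝒪 R : Type} [Fintype 𝒪] [DecidableEq 𝒪] [Fintype R]

lemma init_extend (o o' : 𝒪) (a : Bool) :
    (initHist o).extend a o' = prep o a (initHist o') := by
  unfold initHist Hist.extend prep
  refine Prod.ext ?_ ?_
  · show Fin.snoc (fun _ => o) o' = Fin.cons (α := fun _ => 𝒪) o (fun _ => o')
    funext i
    refine Fin.cases ?_ (fun j => ?_) i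
    · rw [Fin.cons_zero]
      show Fin.snoc (α := fun _ => 𝒪) (fun _ => o) o' (Fin.castSucc 0) = o
      rw [Fin.snoc_castSucc]
    · rw [Fin.cons_succ]
      have hj : j = 0 := by
        have hv : (j : ℕ) = 0 := by omega
        exact Fin.ext (by simp [hv])
      subst hj
      show Fin.snoc (α := fun _ => 𝒪) (fun _ => o) o' (Fin.last 1) = o'
      rw [Fin.snoc_last]
  · show Fin.snoc (fun i => i.elim0) a = Fin.cons (α := fun _ => Bool) a (fun i => i.elim0)
    funext i
    have hi : i = 0 := by
      have hv : (i : ℕ) = 0 := by omega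
      exact Fin.ext (by simp [hv])
    subst hi
    rw [Fin.cons_zero]
    show Fin.snoc (α := fun _ => Bool) (fun i => i.elim0) a (Fin.last 0) = a
    rw [Fin.snoc_last]

lemma EO_one : ∀ (T : ℕ) (q : (t : ℕ) → Hist 𝒪 t → Bool → R × 𝒪 → ℝ),
    (∀ t, t < T → ∀ (h : Hist 𝒪 t) (b : Bool), ∑ ro : R × 𝒪, q t h b ro = 1) →
    ∀ (a : Bool) (o : 𝒪), EO (T := T) q a o (fun _ _ => 1) = 1 := by
  intro T
  induction T with
  | zero =>
    intro q hqs a o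
    unfold EO
    rw [sum_pi_cons (fun ω => ∑ r : Fin 0 → R,
      (if ω 0 = o then fw (T := 0) q a ω r * 1 else 0))]
    have h1 : ∀ (x : 𝒪) (f : Fin 0 → 𝒪) (r : Fin 0 → R),
        fw (T := 0) q a (Fin.cons x f) r = 1 := by
      intro x f r; unfold fw; simp
    simp [h1, Fin.cons_zero]
  | succ T IH =>
    intro q hqs a o
    rw [EO_peel]
    have h1 : ∀ ro : R × 𝒪,
        EO (T := T) (qshift q o a) a ro.2 (fun (_ : Fin (T+1) → 𝒪) (_ : Fin T → R) => (1:ℝ)) = 1 :=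
      fun ro => IH (qshift q o a) (fun t ht h b => hqs (t+1) (by omega) _ b) a ro.2
    simp only [h1, mul_one]
    exact hqs 0 (Nat.succ_pos T) (initHist o) a

lemma EO_const (T : ℕ) (q : (t : ℕ) → Hist 𝒪 t → Bool → R × 𝒪 → ℝ)
    (hqs : ∀ t, t < T → ∀ (h : Hist 𝒪 t) (b : Bool), ∑ ro : R × 𝒪, q t h b ro = 1)
    (a : Bool) (o : 𝒪) (c : ℝ) : EO (T := T) q a o (fun _ _ => c) = c := by
  have e : (fun (_ : Fin (T+1) → 𝒪) (_ : Fin T → R) => c)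
      = fun (ω : Fin (T+1) → 𝒪) (r : Fin T → R) => c * (1:ℝ) := by
    funext ω r; ring
  rw [e, EO_smul, EO_one T q hqs a o, mul_one]

lemma EO_val (val : R → ℝ) : ∀ (T : ℕ) (q : (t : ℕ) → Hist 𝒪 t → Bool → R × 𝒪 → ℝ),
    (∀ t, t < T → ∀ (h : Hist 𝒪 t) (b : Bool), ∑ ro : R × 𝒪, q t h b ro = 1) →
    ∀ (a : Bool) (o : 𝒪),
      EO (T := T) q a o (fun ω r => ∑ t : Fin T, val (r t))
        = Vfun T q val a 0 (initHist o) := by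
  intro T
  induction T with
  | zero =>
    intro q hqs a o
    simp [EO, Vfun, Vaux]
  | succ T IH =>
    intro q hqs a o
    have hqs' : ∀ t, t < T → ∀ (h : Hist 𝒪 t) (b : Bool),
        ∑ ro : R × 𝒪, (qshift q o a) t h b ro = 1 :=
      fun t ht h b => hqs (t+1) (by omega) _ b
    rw [EO_peel]
    have h2 : ∀ ro : R × 𝒪,
        EO (T := T) (qshift q o a) a ro.2
          (fun (ω : Fin (T+1) → 𝒪) (r : Fin T → R) => ∑ t : Fin (T+1), val (Fin.cons (α := fun _ => R) ro.1 r t))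
        = val ro.1 + Vfun T (qshift q o a) val a 0 (initHist ro.2) := by
      intro ro
      have e : (fun (ω : Fin (T+1) → 𝒪) (r : Fin T → R) => ∑ t : Fin (T+1), val (Fin.cons (α := fun _ => R) ro.1 r t))
          = fun (ω : Fin (T+1) → 𝒪) (r : Fin T → R) =>
              (fun (_ : Fin (T+1) → 𝒪) (_ : Fin T → R) => val ro.1) ω r
                + (fun (_ : Fin (T+1) → 𝒪) (r : Fin T → R) => ∑ t : Fin T, val (r t)) ω r := by
        funext ω r
        rw [Fin.sum_univ_succ]
        simp
      rw [e, EO_add, EO_const T (qshift q o a) hqs' a ro.2, IH (qshift q o a) hqs' a ro.2]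
    simp only [h2]
    rw [Vfun_succ (T+1) q val a 0 (Nat.succ_pos T) (initHist o)]
    refine Finset.sum_congr rfl fun ro _ => ?_
    rw [init_extend, Vfun_shift]

lemma EO_sq (T : ℕ) (q : (t : ℕ) → Hist 𝒪 t → Bool → R × 𝒪 → ℝ)
    (hqs : ∀ t, t < T → ∀ (h : Hist 𝒪 t) (b : Bool), ∑ ro : R × 𝒪, q t h b ro = 1)
    (a : Bool) (o : 𝒪) (c : ℝ) (X : (Fin (T+1) → 𝒪) → (Fin T → R) → ℝ)
    (hX : EO q a o X = 0) :
    EO q a o (fun ω r => (c + X ω r)^2)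
      = c^2 + EO q a o (fun ω r => (X ω r)^2) := by
  have e : (fun (ω : Fin (T+1) → 𝒪) (r : Fin T → R) => (c + X ω r)^2)
      = fun ω r => (c^2) * (1:ℝ) + ((2*c) * X ω r + (X ω r)^2) := by
    funext ω r; ring
  rw [e, EO_add, EO_add, EO_smul, EO_smul, EO_one T q hqs a o, hX]
  ring

lemma EO_center (val : R → ℝ) (T : ℕ) (q : (t : ℕ) → Hist 𝒪 t → Bool → R × 𝒪 → ℝ)
    (hqs : ∀ t, t < T → ∀ (h : Hist 𝒪 t) (b : Bool), ∑ ro : R × 𝒪, q t h b ro = 1)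
    (a : Bool) (o : 𝒪) :
    EO (T := T) q a o
      (fun ω r => (∑ t : Fin T, val (r t)) - Vfun T q val a 0 (initHist o)) = 0 := by
  have e : (fun (ω : Fin (T+1) → 𝒪) (r : Fin T → R) =>
        (∑ t : Fin T, val (r t)) - Vfun T q val a 0 (initHist o))
      = fun (ω : Fin (T+1) → 𝒪) (r : Fin T → R) =>
          (∑ t : Fin T, val (r t)) + (-(Vfun T q val a 0 (initHist o))) * (1:ℝ) := by
    funext ω r; ring
  rw [e, EO_add, EO_smul, EO_one T q hqs a o, EO_val val T q hqs a o]
  ring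
end Dev3
section Dev4
set_option linter.unusedSectionVars false
set_option linter.unusedVariables false
set_option maxHeartbeats 1000000
variable {𝒪 R : Type} [Fintype 𝒪] [DecidableEq 𝒪] [Fintype R]

lemma key (val : R → ℝ) : ∀ (T : ℕ) (q : (t : ℕ) → Hist 𝒪 t → Bool → R × 𝒪 → ℝ),
    (∀ t, t < T → ∀ (h : Hist 𝒪 t) (b : Bool), ∑ ro : R × 𝒪, q t h b ro = 1) →
    ∀ (a : Bool) (o : 𝒪),
    (∑ t : Fin T, EO (T := T) q a o (fun ω r => tdVar T q val a t (hcut ω a t)))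
      = EO (T := T) q a o
          (fun ω r => ((∑ t : Fin T, val (r t)) - Vfun T q val a 0 (initHist o))^2) := by
  intro T
  induction T with
  | zero =>
    intro q hqs a o
    simp [EO, Vfun, Vaux]
  | succ T IH =>
    intro q hqs a o
    have hqs' : ∀ t, t < T → ∀ (h : Hist 𝒪 t) (b : Bool),
        ∑ ro : R × 𝒪, (qshift q o a) t h b ro = 1 :=
      fun t ht h b => hqs (t+1) (by omega) _ b
    rw [Fin.sum_univ_succ]
    have hzero : EO (T := T+1) q a o
        (fun ω r => tdVar (T+1) q val a ((0 : Fin (T+1)) : ℕ) (hcut ω a 0))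
        = tdVar (T+1) q val a 0 (initHist o) := by
      have hc : ∀ (ω : Fin (T+2) → 𝒪) (r : Fin (T+1) → R), ω 0 = o →
          tdVar (T+1) q val a ((0 : Fin (T+1)) : ℕ) (hcut ω a 0)
            = tdVar (T+1) q val a 0 (initHist o) := by
        intro ω r h0
        rw [hcut_zero, h0]
        rfl
      rw [EO_congr hc]
      exact EO_const (T+1) q hqs a o _
    have hsucc : ∀ t : Fin T,
        EO (T := T+1) q a o
          (fun ω r => tdVar (T+1) q val a ((t.succ : Fin (T+1)) : ℕ) (hcut ω a t.succ))
          = ∑ ro : R × 𝒪, q 0 (initHist o) a ro *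
              EO (T := T) (qshift q o a) a ro.2
                (fun ω r => tdVar T (qshift q o a) val a t (hcut ω a t)) := by
      intro t
      rw [EO_peel]
      refine Finset.sum_congr rfl fun ro _ => ?_
      refine congrArg (fun G => q 0 (initHist o) a ro * G) (EO_congr fun ω r _ => ?_)
      rw [hcut_succ]
      exact tdVar_shift T q val o a t (hcut ω a t)
    rw [hzero, Finset.sum_congr rfl fun t _ => hsucc t, Finset.sum_comm]
    have hIH : ∀ ro : R × 𝒪,
        (∑ t : Fin T, q 0 (initHist o) a ro *
          EO (T := T) (qshift q o a) a ro.2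
            (fun ω r => tdVar T (qshift q o a) val a t (hcut ω a t)))
        = q 0 (initHist o) a ro *
            EO (T := T) (qshift q o a) a ro.2
              (fun ω r => ((∑ t : Fin T, val (r t))
                  - Vfun T (qshift q o a) val a 0 (initHist ro.2))^2) := by
      intro ro
      rw [← Finset.mul_sum, IH (qshift q o a) hqs' a ro.2]
    rw [Finset.sum_congr rfl fun ro _ => hIH ro]
    rw [EO_peel]
    have hδ : ∀ ro : R × 𝒪,
        EO (T := T) (qshift q o a) a ro.2
          (fun (ω : Fin (T+1) → 𝒪) (r : Fin T → R) =>
            ((∑ t : Fin (T+1), val (Fin.cons (α := fun _ => R) ro.1 r t))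
              - Vfun (T+1) q val a 0 (initHist o))^2)
        = (val ro.1 + Vfun T (qshift q o a) val a 0 (initHist ro.2)
            - Vfun (T+1) q val a 0 (initHist o))^2
          + EO (T := T) (qshift q o a) a ro.2
              (fun ω r => ((∑ t : Fin T, val (r t))
                - Vfun T (qshift q o a) val a 0 (initHist ro.2))^2) := by
      intro ro
      have e2 : (fun (ω : Fin (T+1) → 𝒪) (r : Fin T → R) =>
            ((∑ t : Fin (T+1), val (Fin.cons (α := fun _ => R) ro.1 r t))
              - Vfun (T+1) q val a 0 (initHist o))^2)
          = fun (ω : Fin (T+1) → 𝒪) (r : Fin T → R) =>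
              ((val ro.1 + Vfun T (qshift q o a) val a 0 (initHist ro.2)
                  - Vfun (T+1) q val a 0 (initHist o))
                + ((fun (ω : Fin (T+1) → 𝒪) (r : Fin T → R) =>
                    (∑ t : Fin T, val (r t))
                      - Vfun T (qshift q o a) val a 0 (initHist ro.2)) ω r))^2 := by
        funext ω r
        rw [Fin.sum_univ_succ]
        simp only [Fin.cons_zero, Fin.cons_succ]
        ring
      rw [e2, EO_sq T (qshift q o a) hqs' a ro.2 _ _
        (EO_center val T (qshift q o a) hqs' a ro.2)]
    simp only [hδ]
    simp only [mul_add]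
    rw [Finset.sum_add_distrib]
    have hTD : tdVar (T+1) q val a 0 (initHist o)
        = ∑ ro : R × 𝒪, q 0 (initHist o) a ro *
            (val ro.1 + Vfun T (qshift q o a) val a 0 (initHist ro.2)
              - Vfun (T+1) q val a 0 (initHist o))^2 := by
      rw [tdVar_eq (T+1) q val a 0 (Nat.succ_pos T) (initHist o)
        (hqs 0 (Nat.succ_pos T) (initHist o) a)]
      refine Finset.sum_congr rfl fun ro _ => ?_
      rw [init_extend, Vfun_shift]
    rw [hTD]

end Dev4
section Dev5
set_option linter.unusedSectionVars false
set_option linter.unusedVariables false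
set_option maxHeartbeats 1000000
variable {𝒪 R : Type} [Fintype 𝒪] [DecidableEq 𝒪] [Fintype R]

lemma sum_fiber (f : 𝒪 → ℝ) {T : ℕ} (F : (Fin (T+1) → 𝒪) → (Fin T → R) → ℝ) :
    (∑ ω : Fin (T+1) → 𝒪, ∑ r : Fin T → R, f (ω 0) * F ω r)
      = ∑ o : 𝒪, f o * ∑ ω : Fin (T+1) → 𝒪, ∑ r : Fin T → R,
          (if ω 0 = o then F ω r else 0) := by
  symm
  calc ∑ o : 𝒪, f o * ∑ ω : Fin (T+1) → 𝒪, ∑ r : Fin T → R,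
          (if ω 0 = o then F ω r else 0)
      = ∑ o : 𝒪, ∑ ω : Fin (T+1) → 𝒪, ∑ r : Fin T → R,
          (if ω 0 = o then f o * F ω r else 0) := by
        refine Finset.sum_congr rfl fun o _ => ?_
        rw [Finset.mul_sum]
        refine Finset.sum_congr rfl fun ω _ => ?_
        rw [Finset.mul_sum]
        refine Finset.sum_congr rfl fun r _ => ?_
        split <;> ring
    _ = ∑ ω : Fin (T+1) → 𝒪, ∑ o : 𝒪, ∑ r : Fin T → R,
          (if ω 0 = o then f o * F ω r else 0) := Finset.sum_comm
    _ = ∑ ω : Fin (T+1) → 𝒪, ∑ r : Fin T → R, ∑ o : 𝒪,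
          (if ω 0 = o then f o * F ω r else 0) :=
        Finset.sum_congr rfl fun ω _ => Finset.sum_comm
    _ = ∑ ω : Fin (T+1) → 𝒪, ∑ r : Fin T → R, f (ω 0) * F ω r := by
        refine Finset.sum_congr rfl fun ω _ => Finset.sum_congr rfl fun r _ => ?_
        rw [Finset.sum_ite_eq Finset.univ (ω 0)]
        simp

lemma sstar_eq (T : ℕ) (q : (t : ℕ) → Hist 𝒪 t → Bool → R × 𝒪 → ℝ) (val : R → ℝ)
    (o : 𝒪) (a : Bool) :
    sstarSq T q val o a
      = EO (T := T) q a o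
          (fun ω r => ((∑ t : Fin T, val (r t)) - Vfun T q val a 0 (initHist o))^2) := by
  unfold sstarSq EO
  rw [Fintype.sum_prod_type]
  refine Finset.sum_congr rfl fun ω _ => ?_
  rw [Fintype.sum_prod_type]
  rw [Finset.sum_eq_single (fun _ => a)
    (fun b _ hb => ?_) (fun h => absurd (Finset.mem_univ _) h)]
  · refine Finset.sum_congr rfl fun r _ => ?_
    unfold trajProb globPol
    simp only [hist_const, eq_self_iff_true, if_true, one_mul]
    unfold fw
    split <;> simp
  · apply Finset.sum_eq_zero
    intro r _
    have : ∃ j, b j ≠ a := by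
      by_contra hc
      push_neg at hc
      exact hb (funext fun j => hc j)
    obtain ⟨j, hj⟩ := this
    unfold trajProb globPol
    rw [Finset.prod_eq_zero (Finset.mem_univ j) (by rw [if_neg hj, zero_mul])]
    ring

lemma classPol_one (p : 𝒪 → ℝ) {T : ℕ} (ω : Fin (T+1) → 𝒪) (a : Bool)
    (k : Fin T) (hk : (k : ℕ) ≠ 0) : classPol 𝒪 p (k : ℕ) (hcut ω a k) a = 1 := by
  unfold classPol
  rw [dif_neg hk]
  simp [hcut]

lemma classPol_zero (p : 𝒪 → ℝ) {T : ℕ} (ω : Fin (T+1) → 𝒪) (a : Bool)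
    (k : Fin T) (hk : (k : ℕ) = 0) :
    classPol 𝒪 p (k : ℕ) (hcut ω a k) a = (if a then p (ω 0) else 1 - p (ω 0)) := by
  unfold classPol
  rw [dif_pos hk]
  have : (hcut ω a k).1 0 = ω 0 := congrArg ω (Fin.ext (by simp))
  rw [this]

lemma isTerm_eq_s14 (T : ℕ) (μ : 𝒪 → ℝ) (q : (t : ℕ) → Hist 𝒪 t → Bool → R × 𝒪 → ℝ)
    (val : R → ℝ) (p : 𝒪 → ℝ) (hp : ∀ o, 0 < p o ∧ p o < 1) (a : Bool) (t : Fin T) :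
    isTerm T μ q val (classPol 𝒪 p) a t
      = ∑ o : 𝒪, (μ o * (if a then p o else 1 - p o)⁻¹) *
          EO (T := T) q a o (fun ω r => tdVar T q val a (t : ℕ) (hcut ω a t)) := by
  unfold isTerm
  rw [Fintype.sum_prod_type]
  have hstep : ∀ ω : Fin (T+1) → 𝒪,
      (∑ br : (Fin T → Bool) × (Fin T → R),
        trajProb μ q (classPol 𝒪 p) (ω, br)
          * tdVar T q val a (t : ℕ) (Traj.hist (ω, br) t)
          * ∏ k : Fin T, (if (k : ℕ) ≤ (t : ℕ) then
              (if (ω, br).2.1 k = a then ((classPol 𝒪 p (k : ℕ) (Traj.hist (ω, br) k) a) ^ 2)⁻¹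
                else 0) else 1))
      = ∑ r : Fin T → R,
          (μ (ω 0) * (if a then p (ω 0) else 1 - p (ω 0))⁻¹) *
            (fw q a ω r * tdVar T q val a (t : ℕ) (hcut ω a t)) := by
    intro ω
    rw [Fintype.sum_prod_type]
    rw [Finset.sum_eq_single (fun _ => a)
      (fun b _ hb => ?_) (fun h => absurd (Finset.mem_univ _) h)]
    · refine Finset.sum_congr rfl fun r _ => ?_
      simp only [hist_const]
      have hP : 0 < (if a then p (ω 0) else 1 - p (ω 0)) := by
        split
        · exact (hp (ω 0)).1
        · have := (hp (ω 0)).2; linarith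
      have hprod1 : (∏ k : Fin T, classPol 𝒪 p (k : ℕ) (hcut ω a k) a)
          = (if a then p (ω 0) else 1 - p (ω 0)) := by
        rw [Finset.prod_eq_single (⟨0, t.pos⟩ : Fin T)
          (fun k _ hk => classPol_one p ω a k (fun h0 => hk (Fin.ext h0)))
          (fun h => absurd (Finset.mem_univ _) h)]
        exact classPol_zero p ω a ⟨0, t.pos⟩ rfl
      have htraj : trajProb μ q (classPol 𝒪 p) (ω, fun _ => a, r)
          = μ (ω 0) * ((if a then p (ω 0) else 1 - p (ω 0)) * fw q a ω r) := by
        unfold trajProb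
        simp only [hist_const]
        rw [Finset.prod_mul_distrib, hprod1]
        rfl
      have hw : (∏ k : Fin T, (if (k : ℕ) ≤ (t : ℕ) then
            (if True then
              ((classPol 𝒪 p (k : ℕ) (hcut ω a k) a) ^ 2)⁻¹ else 0) else 1))
          = ((if a then p (ω 0) else 1 - p (ω 0)) ^ 2)⁻¹ := by
        rw [Finset.prod_eq_single (⟨0, t.pos⟩ : Fin T)
          (fun k _ hk => ?_) (fun h => absurd (Finset.mem_univ _) h)]
        · rw [if_pos (Nat.zero_le _), if_pos trivial,
            classPol_zero p ω a ⟨0, t.pos⟩ rfl]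
        · by_cases hkt : (k : ℕ) ≤ (t : ℕ)
          · rw [if_pos hkt, if_pos trivial, classPol_one p ω a k (fun h0 => hk (Fin.ext h0))]
            norm_num
          · rw [if_neg hkt]
      rw [htraj, hw]
      set P := (if a = true then p (ω 0) else 1 - p (ω 0)) with hPdef
      rw [show μ (ω 0) * (P * fw q a ω r) * tdVar T q val a (t : ℕ) (hcut ω a t) * (P ^ 2)⁻¹
          = (P * (P ^ 2)⁻¹) * (μ (ω 0) * fw q a ω r * tdVar T q val a (t : ℕ) (hcut ω a t))
        from by ring]
      rw [show P * (P ^ 2)⁻¹ = P⁻¹ from by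
        field_simp [hP.ne']]
      ring
    · apply Finset.sum_eq_zero
      intro r _
      by_cases hb0 : b ⟨0, t.pos⟩ = a
      · have : ∃ j, b j ≠ a := by
          by_contra hc
          push_neg at hc
          exact hb (funext fun j => hc j)
        obtain ⟨j, hj⟩ := this
        have hj0 : (j : ℕ) ≠ 0 := by
          intro h0
          apply hj
          have hje : j = ⟨0, t.pos⟩ := Fin.ext h0
          rw [hje]
          exact hb0
        have hπ : classPol 𝒪 p (j : ℕ) (Traj.hist (ω, b, r) j) (b j) = 0 := by
          unfold classPol
          rw [dif_neg hj0]
          rw [if_neg ?_]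
          have he : (Traj.hist (𝒪 := 𝒪) (R := R) (ω, b, r) j).2
              ⟨0, Nat.pos_of_ne_zero hj0⟩ = b ⟨0, t.pos⟩ :=
            congrArg b (Fin.ext rfl)
          rw [he, hb0]
          exact hj
        unfold trajProb
        rw [Finset.prod_eq_zero (Finset.mem_univ j) (by rw [hπ, zero_mul])]
        ring
      · rw [Finset.prod_eq_zero (Finset.mem_univ (⟨0, t.pos⟩ : Fin T))
          (by rw [if_pos (Nat.zero_le _), if_neg hb0])]
        ring
  rw [Finset.sum_congr rfl fun ω _ => hstep ω]
  rw [sum_fiber (fun o => μ o * (if a then p o else 1 - p o)⁻¹)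
    (fun ω r => fw q a ω r * tdVar T q val a (t : ℕ) (hcut ω a t))]
  refine Finset.sum_congr rfl fun o _ => rfl

end Dev5

/-- **Collapse of the sequential importance-sampling variance term for in-class designs
(intermediate identity in the proof of Theorem 1 of the paper).**
For the behavior policy that draws `A₁` given `O₁ = o` with probability `p(o) ∈ (0,1)`
of `A₁ = 1` and sets `A_t = A₁` for all later `t`,
`Σ_{a∈{0,1}} Σ_{t=1}^T E^{π^b}[σ_t²(H_t,a) Π_{k≤t} 1(A_k=a)/π_k^b(a|H_k)²]
  = E_{O₁∼μ}[σ_*²(O₁,1)/p(O₁) + σ_*²(O₁,0)/(1 − p(O₁))]`.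
Rewards take values in the finite alphabet `ℛ ⊂ ℝ` (encoded as the subtype `↥ℛ`). -/
theorem nmdp_inclass_is_term_collapse {𝒪 : Type} [Fintype 𝒪] [DecidableEq 𝒪] [Nonempty 𝒪]
    (T : ℕ) (hT : 1 ≤ T) (ℛ : Finset ℝ)
    (μ : 𝒪 → ℝ) (hμ : ∀ o, 0 ≤ μ o) (hμ1 : ∑ o : 𝒪, μ o = 1)
    (q : (t : ℕ) → Hist 𝒪 t → Bool → ↥ℛ × 𝒪 → ℝ)
    (hqnn : ∀ t, t < T → ∀ (h : Hist 𝒪 t) (a : Bool) (ro : ↥ℛ × 𝒪), 0 ≤ q t h a ro)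
    (hqsum : ∀ t, t < T → ∀ (h : Hist 𝒪 t) (a : Bool), ∑ ro : ↥ℛ × 𝒪, q t h a ro = 1)
    (p : 𝒪 → ℝ) (hp : ∀ o, 0 < p o ∧ p o < 1) :
    ∑ a : Bool, ∑ t : Fin T, isTerm T μ q (Subtype.val : ↥ℛ → ℝ) (classPol 𝒪 p) a t
      = ∑ o : 𝒪, μ o *
          (sstarSq T q (Subtype.val : ↥ℛ → ℝ) o true / p o
            + sstarSq T q (Subtype.val : ↥ℛ → ℝ) o false / (1 - p o)) := by
  have hmain : ∀ a : Bool,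
      (∑ t : Fin T, isTerm T μ q (Subtype.val : ↥ℛ → ℝ) (classPol 𝒪 p) a t)
        = ∑ o : 𝒪, (μ o * (if a then p o else 1 - p o)⁻¹) *
            sstarSq T q (Subtype.val : ↥ℛ → ℝ) o a := by
    intro a
    rw [Finset.sum_congr rfl fun t _ =>
      isTerm_eq_s14 T μ q (Subtype.val : ↥ℛ → ℝ) p hp a t]
    rw [Finset.sum_comm]
    refine Finset.sum_congr rfl fun o _ => ?_
    rw [← Finset.mul_sum]
    rw [key (Subtype.val : ↥ℛ → ℝ) T q hqsum a o]
    rw [← sstar_eq T q (Subtype.val : ↥ℛ → ℝ) o a]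
  rw [Fintype.sum_bool, hmain true, hmain false, ← Finset.sum_add_distrib]
  refine Finset.sum_congr rfl fun o _ => ?_
  simp only [if_true, Bool.false_eq_true, if_false]
  rw [div_eq_mul_inv, div_eq_mul_inv]
  ring
end
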